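/- arXiv:0908.3628 — 3 statements merged into one kernel-verified Lean document; each statement's English description precedes it below -/
import Mathlib

section
/- In the nilCoxeter algebra of W_n, the elements A_i(t) = (1 + t u_{n-1})(1 + t u_{n-2})···(1 + t u_i) satisfy A_i(s) A_i(t) = A_i(t) A_i(s) for all commuting indeterminates s, t and all indices 1 ≤ i ≤ n-1. -/
open Equiv

attribute [local instance] Classical.propDecidable

noncomputable section

namespace Giambelli

/-- The simple reflection `s_i` of the (infinite) hyperoctahedral group, realized
inside `Equiv.Perm ℤ`: `s_0` is the sign change of the first entry, and `s_i`
(`i ≥ 1`) swaps the entries in positions `i` and `i+1`. -/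
def wS (i : ℕ) : Equiv.Perm ℤ :=
  if i = 0 then Equiv.swap 1 (-1)
  else Equiv.swap (i : ℤ) ((i : ℤ) + 1) * Equiv.swap (-(i : ℤ)) (-((i : ℤ) + 1))

/-- `f` is a signed permutation: `f(-i) = -f(i)`. -/
def IsOddPerm (f : Equiv.Perm ℤ) : Prop := ∀ i : ℤ, f (-i) = - f i

/-- `f` moves only entries of absolute value at most `n`. -/
def SuppLe (n : ℕ) (f : Equiv.Perm ℤ) : Prop := ∀ i : ℤ, (n : ℤ) < |i| → f i = i

/-- Membership in the hyperoctahedral group `W_n`. -/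
def InWn (n : ℕ) (f : Equiv.Perm ℤ) : Prop := IsOddPerm f ∧ SuppLe n f

/-- Membership in `W_∞ = ∪_n W_n`. -/
def InWinf (f : Equiv.Perm ℤ) : Prop := IsOddPerm f ∧ ∃ n : ℕ, SuppLe n f

/-- The Coxeter length: the least length of a word in the `s_i` representing `f`. -/
def len (f : Equiv.Perm ℤ) : ℕ :=
  sInf {m : ℕ | ∃ l : List ℕ, l.length = m ∧ (l.map wS).prod = f}

/-- `f` has a descent at position `p ≥ 0`, where by convention `w_0 = 0`. -/
def Descent (f : Equiv.Perm ℤ) (p : ℕ) : Prop :=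
  f ((p : ℤ) + 1) < (if p = 0 then 0 else f (p : ℤ))

/-- `f` is increasing up to `k`: it has no descent at any position `< k`. -/
def IncUpTo (k : ℕ) (f : Equiv.Perm ℤ) : Prop := ∀ p : ℕ, p < k → ¬ Descent f p

/-- `f` is `k`-Grassmannian: `ℓ(f s_i) = ℓ(f) + 1` for all `i ≠ k`. -/
def kGrass (k : ℕ) (f : Equiv.Perm ℤ) : Prop :=
  ∀ i : ℕ, i ≠ k → len (f * wS i) = len f + 1

/-- The reflection `t_{ij}`, swapping the entries in positions `i` and `j`. -/
def tt (i j : ℕ) : Equiv.Perm ℤ :=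
  Equiv.swap (i : ℤ) (j : ℤ) * Equiv.swap (-(i : ℤ)) (-(j : ℤ))

/-- The reflection `t̄_{ij}`, swapping and negating the entries in positions `i`,`j`
    (negating the entry in position `i` when `i = j`). -/
def tb (i j : ℕ) : Equiv.Perm ℤ :=
  if i = j then Equiv.swap (i : ℤ) (-(i : ℤ))
  else Equiv.swap (i : ℤ) (-(j : ℤ)) * Equiv.swap (j : ℤ) (-(i : ℤ))

/-- The transition set `Φ(w) = Φ₁(w) ∪ Φ₂(w)` attached to `w` with last descent `r`
and `s` maximal such that `w_s < w_r`. -/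
def Phi (w : Equiv.Perm ℤ) (r s : ℕ) : Set (Equiv.Perm ℤ) :=
  {v | ∃ i : ℕ, 1 ≤ i ∧ i < r ∧ len (w * tt r s * tt i r) = len w ∧ v = w * tt r s * tt i r} ∪
  {v | ∃ i : ℕ, 1 ≤ i ∧ len (w * tt r s * tb i r) = len w ∧ v = w * tt r s * tb i r}

/-- The last descent position of `f`. -/
def lastDescent (f : Equiv.Perm ℤ) : ℕ := sSup {p : ℕ | Descent f p}

/-- `max { i > r | w_i < w_r }`. -/
def maxS (f : Equiv.Perm ℤ) (r : ℕ) : ℕ := sSup {i : ℕ | r < i ∧ f (i : ℤ) < f (r : ℤ)}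

/-- A terminal node of the `k`-transition tree: `w = 1` or the last descent of `w` is `k`. -/
def Terminal (k : ℕ) (w : Equiv.Perm ℤ) : Prop := w = 1 ∨ lastDescent w = k

/-- The edge (parent-to-child) relation of the `k`-transition tree `T^k`. -/
def StepT (k : ℕ) (w v : Equiv.Perm ℤ) : Prop :=
  ¬ Terminal k w ∧ v ∈ Phi w (lastDescent w) (maxS w (lastDescent w))

/-- The defining relations of the nilCoxeter algebra of the hyperoctahedral group `W_n`. -/
inductive NCRel (n : ℕ) : FreeAlgebra ℤ (Fin n) → FreeAlgebra ℤ (Fin n) → Prop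
  | sq (i : Fin n) : NCRel n (FreeAlgebra.ι ℤ i * FreeAlgebra.ι ℤ i) 0
  | comm (i j : Fin n) (h : i.val + 2 ≤ j.val) :
      NCRel n (FreeAlgebra.ι ℤ i * FreeAlgebra.ι ℤ j) (FreeAlgebra.ι ℤ j * FreeAlgebra.ι ℤ i)
  | braid (i j : Fin n) (h1 : 1 ≤ i.val) (h2 : j.val = i.val + 1) :
      NCRel n (FreeAlgebra.ι ℤ i * FreeAlgebra.ι ℤ j * FreeAlgebra.ι ℤ i)
              (FreeAlgebra.ι ℤ j * FreeAlgebra.ι ℤ i * FreeAlgebra.ι ℤ j)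
  | bzero (i j : Fin n) (h0 : i.val = 0) (h1 : j.val = 1) :
      NCRel n (FreeAlgebra.ι ℤ i * FreeAlgebra.ι ℤ j * FreeAlgebra.ι ℤ i * FreeAlgebra.ι ℤ j)
              (FreeAlgebra.ι ℤ j * FreeAlgebra.ι ℤ i * FreeAlgebra.ι ℤ j * FreeAlgebra.ι ℤ i)

/-- The nilCoxeter algebra of `W_n`. -/
abbrev NC (n : ℕ) := RingQuot (NCRel n)

/-- The generator `u_i` of the nilCoxeter algebra (and `0` for `i ≥ n`). -/
def NCgen (n : ℕ) (i : ℕ) : NC n :=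
  if h : i < n then RingQuot.mkAlgHom ℤ (NCRel n) (FreeAlgebra.ι ℤ (⟨i, h⟩ : Fin n)) else 0

/-- The hyperoctahedral group `W_n` as a type. -/
abbrev WnSub (n : ℕ) := {f : Equiv.Perm ℤ // InWn n f}

/-- `l` is a reduced word for `f` (letters in `{0,...,n-1}`). -/
def ReducedWordN (n : ℕ) (f : Equiv.Perm ℤ) (l : List ℕ) : Prop :=
  (∀ a ∈ l, a < n) ∧ (l.map wS).prod = f ∧
    ∀ l' : List ℕ, (∀ a ∈ l', a < n) → (l'.map wS).prod = f → l.length ≤ l'.length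

/-- `C(a) = (1+a u_{n-1})⋯(1+a u_1)(1+2a u_0)(1+a u_1)⋯(1+a u_{n-1})` with scalar `a`. -/
def Celt (n : ℕ) (a : ℤ) : NC n :=
  (((List.range (n - 1)).map fun j => 1 + algebraMap ℤ (NC n) a * NCgen n (n - 1 - j)).prod) *
    (1 + algebraMap ℤ (NC n) (2 * a) * NCgen n 0) *
  (((List.range (n - 1)).map fun j => 1 + algebraMap ℤ (NC n) a * NCgen n (j + 1)).prod)

/-- `A_1(a) = (1+a u_{n-1})(1+a u_{n-2})⋯(1+a u_1)` with scalar `a`. -/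
def A1elt (n : ℕ) (a : ℤ) : NC n :=
  ((List.range (n - 1)).map fun j => 1 + algebraMap ℤ (NC n) a * NCgen n (n - 1 - j)).prod

/-- Polynomials in two central indeterminates `s`, `t` over the nilCoxeter algebra. -/
abbrev NCP (n : ℕ) := Polynomial (Polynomial (NC n))

/-- The generator `u_i` viewed in `NCP n`. -/
def NCPu (n : ℕ) (i : ℕ) : NCP n := Polynomial.C (Polynomial.C (NCgen n i))

/-- The indeterminate `t`. -/
def tvar (n : ℕ) : NCP n := Polynomial.X

/-- The indeterminate `s`. -/
def svar (n : ℕ) : NCP n := Polynomial.C Polynomial.X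

/-- `A_i(t) = (1 + t u_{n-1})(1 + t u_{n-2}) ⋯ (1 + t u_i)`. -/
def Aop (n i : ℕ) (t : NCP n) : NCP n :=
  ((List.range (n - i)).map fun j => 1 + t * NCPu n (n - 1 - j)).prod


/-! ### Auxiliary machinery for `Aop_commute` -/

set_option maxSynthPendingDepth 2

section AuxAbstract

variable {R : Type*} [Ring R]

/-- `PP u t a m = (1 + t u_{a+m-1}) ⋯ (1 + t u_a)` (product of `m` factors). -/
def PP (u : ℕ → R) (t : R) : ℕ → ℕ → R
  | _, 0 => 1
  | a, m + 1 => PP u t (a + 1) m * (1 + t * u a)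

/-- The symmetric correction term. -/
def SS (u : ℕ → R) (x y : R) (a : ℕ) : R :=
  1 + x * u a + y * u a + x * (y * (u a * u (a + 1))) - x * (y * (u (a + 1) * u a))

theorem SS_symm (u : ℕ → R) (x y : R) (hx : ∀ r : R, x * r = r * x) (a : ℕ) :
    SS u x y a = SS u y x a := by
  unfold SS
  have h1 : ∀ r : R, y * (x * r) = x * (y * r) := fun r => by
    rw [← mul_assoc, ← hx y, mul_assoc]
  rw [h1, h1]
  abel

theorem key_identity (u : ℕ → R) (x y : R)
    (hsq : ∀ j, u j * u j = 0)
    (hbraid : ∀ j, 1 ≤ j → u j * u (j + 1) * u j = u (j + 1) * u j * u (j + 1))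
    (hx : ∀ r : R, x * r = r * x) (hy : ∀ r : R, y * r = r * y)
    (a : ℕ) (ha : 1 ≤ a) :
    (1 + x * u a) * ((1 + y * u (a + 1)) * (1 + y * u a))
      = (1 + y * u (a + 1)) * SS u x y a := by
  have sAx : ∀ (j : ℕ) (r : R), u j * (x * r) = x * (u j * r) := fun j r => by
    rw [← mul_assoc, ← hx (u j), mul_assoc]
  have sAx' : ∀ j : ℕ, u j * x = x * u j := fun j => (hx (u j)).symm
  have sAy : ∀ (j : ℕ) (r : R), u j * (y * r) = y * (u j * r) := fun j r => by
    rw [← mul_assoc, ← hy (u j), mul_assoc]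
  have sAy' : ∀ j : ℕ, u j * y = y * u j := fun j => (hy (u j)).symm
  have syx : ∀ r : R, y * (x * r) = x * (y * r) := fun r => by
    rw [← mul_assoc, ← hx y, mul_assoc]
  have syx' : y * x = x * y := (hx y).symm
  have ssq : ∀ (j : ℕ) (r : R), u j * (u j * r) = 0 := fun j r => by
    rw [← mul_assoc, hsq j, zero_mul]
  have hbr : u a * (u (a + 1) * u a) = u (a + 1) * (u a * u (a + 1)) := by
    rw [← mul_assoc, hbraid a ha, mul_assoc]
  unfold SS
  simp only [mul_add, add_mul, mul_sub, sub_mul, mul_one, one_mul, mul_assoc, sAx, sAx', sAy,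
    sAy', syx, syx', ssq, hsq, hbr, mul_zero, zero_mul, add_zero, zero_add, sub_zero]
  abel

/-- `1 + x * u a` commutes with `PP u y b m` when `a + 2 ≤ b`. -/
theorem distant_commute (u : ℕ → R) (x y : R)
    (hcomm : ∀ j k, j + 2 ≤ k → u j * u k = u k * u j)
    (hx : ∀ r : R, x * r = r * x) (hy : ∀ r : R, y * r = r * y) (a : ℕ) :
    ∀ m b, a + 2 ≤ b → Commute (1 + x * u a) (PP u y b m) := by
  intro m
  induction m with
  | zero => intro b _; exact Commute.one_right _
  | succ k ih =>
    intro b hb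
    show Commute (1 + x * u a) (PP u y (b + 1) k * (1 + y * u b))
    refine Commute.mul_right (ih (b + 1) (by omega)) ?_
    refine Commute.add_right (Commute.one_right _) ?_
    have cy : Commute (1 + x * u a) y := (hy (1 + x * u a)).symm
    have cxb : Commute x (u b) := hx (u b)
    have cab : Commute (u a) (u b) := hcomm a b hb
    have cub : Commute (1 + x * u a) (u b) :=
      Commute.add_left (Commute.one_left _) (Commute.mul_left cxb cab)
    exact Commute.mul_right cy cub

theorem comm_pull {c p : R} (h : Commute c p) (r : R) : c * (p * r) = p * (c * r) := by
  rw [← mul_assoc, h.eq, mul_assoc]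

/-- One inductive step: peel off the symmetric correction term. -/
theorem step_identity (u : ℕ → R) (x y : R)
    (hsq : ∀ j, u j * u j = 0)
    (hcomm : ∀ j k, j + 2 ≤ k → u j * u k = u k * u j)
    (hbraid : ∀ j, 1 ≤ j → u j * u (j + 1) * u j = u (j + 1) * u j * u (j + 1))
    (hx : ∀ r : R, x * r = r * x) (hy : ∀ r : R, y * r = r * y)
    (a j : ℕ) (ha : 1 ≤ a) :
    PP u x a (j + 2) * PP u y a (j + 2)
      = PP u x (a + 1) (j + 1) * PP u y (a + 1) (j + 1) * SS u x y a := by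
  have e1 : PP u x a (j + 2) = PP u x (a + 1) (j + 1) * (1 + x * u a) := rfl
  have e2 : PP u y a (j + 2)
      = PP u y (a + 2) j * (1 + y * u (a + 1)) * (1 + y * u a) := rfl
  have e3 : PP u y (a + 1) (j + 1) = PP u y (a + 2) j * (1 + y * u (a + 1)) := rfl
  rw [e1, e2, e3]
  have hd := distant_commute u x y hcomm hx hy a j (a + 2) (by omega)
  have hk := key_identity u x y hsq hbraid hx hy a ha
  simp only [mul_assoc]
  rw [comm_pull hd, hk]

theorem PP_comm (u : ℕ → R) (x y : R)
    (hsq : ∀ j, u j * u j = 0)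
    (hcomm : ∀ j k, j + 2 ≤ k → u j * u k = u k * u j)
    (hbraid : ∀ j, 1 ≤ j → u j * u (j + 1) * u j = u (j + 1) * u j * u (j + 1))
    (hx : ∀ r : R, x * r = r * x) (hy : ∀ r : R, y * r = r * y) :
    ∀ m a, 1 ≤ a → PP u x a m * PP u y a m = PP u y a m * PP u x a m := by
  intro m
  induction m with
  | zero => intro a _; rfl
  | succ k ih =>
    cases k with
    | zero =>
      intro a _
      show (1 * (1 + x * u a)) * (1 * (1 + y * u a))
          = (1 * (1 + y * u a)) * (1 * (1 + x * u a))
      have sAx : ∀ r : R, u a * (x * r) = x * (u a * r) := fun r => by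
        rw [← mul_assoc, ← hx (u a), mul_assoc]
      have sAy : ∀ r : R, u a * (y * r) = y * (u a * r) := fun r => by
        rw [← mul_assoc, ← hy (u a), mul_assoc]
      have syx' : y * x = x * y := (hx y).symm
      simp only [one_mul, mul_add, add_mul, mul_one, mul_assoc, sAx, sAy, syx',
        hsq, mul_zero, zero_mul, add_zero, zero_add]
      abel
    | succ j =>
      intro a ha
      have h1 := step_identity u x y hsq hcomm hbraid hx hy a j ha
      have h2 := step_identity u y x hsq hcomm hbraid hy hx a j ha
      rw [h1, h2, ih (a + 1) (by omega), SS_symm u x y hx]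

end AuxAbstract

section AuxConcrete

variable (n : ℕ)

theorem NCgen_sq (j : ℕ) : NCgen n j * NCgen n j = 0 := by
  unfold NCgen
  by_cases h : j < n
  · rw [dif_pos h, ← map_mul]
    have := RingQuot.mkAlgHom_rel ℤ (NCRel.sq (⟨j, h⟩ : Fin n))
    rw [this, map_zero]
  · rw [dif_neg h, mul_zero]

theorem NCgen_comm (j k : ℕ) (hjk : j + 2 ≤ k) :
    NCgen n j * NCgen n k = NCgen n k * NCgen n j := by
  unfold NCgen
  by_cases hk : k < n
  · have hj : j < n := by omega
    rw [dif_pos hj, dif_pos hk, ← map_mul, ← map_mul]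
    exact RingQuot.mkAlgHom_rel ℤ (NCRel.comm (⟨j, hj⟩ : Fin n) (⟨k, hk⟩ : Fin n) hjk)
  · rw [dif_neg hk, mul_zero, zero_mul]

theorem NCgen_braid (j : ℕ) (hj : 1 ≤ j) :
    NCgen n j * NCgen n (j + 1) * NCgen n j
      = NCgen n (j + 1) * NCgen n j * NCgen n (j + 1) := by
  by_cases hk : j + 1 < n
  · have hjn : j < n := by omega
    unfold NCgen
    rw [dif_pos hjn, dif_pos hk, ← map_mul, ← map_mul, ← map_mul, ← map_mul]
    exact RingQuot.mkAlgHom_rel ℤ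
      (NCRel.braid (⟨j, hjn⟩ : Fin n) (⟨j + 1, hk⟩ : Fin n) hj rfl)
  · unfold NCgen
    rw [dif_neg hk]
    simp

theorem NCPu_sq (j : ℕ) : NCPu n j * NCPu n j = 0 := by
  unfold NCPu
  rw [← Polynomial.C_mul, ← Polynomial.C_mul, NCgen_sq, Polynomial.C_0, Polynomial.C_0]

theorem NCPu_comm (j k : ℕ) (hjk : j + 2 ≤ k) :
    NCPu n j * NCPu n k = NCPu n k * NCPu n j := by
  unfold NCPu
  rw [← Polynomial.C_mul, ← Polynomial.C_mul, ← Polynomial.C_mul, ← Polynomial.C_mul,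
    NCgen_comm n j k hjk]

theorem NCPu_braid (j : ℕ) (hj : 1 ≤ j) :
    NCPu n j * NCPu n (j + 1) * NCPu n j
      = NCPu n (j + 1) * NCPu n j * NCPu n (j + 1) := by
  unfold NCPu
  simp only [← Polynomial.C_mul]
  rw [NCgen_braid n j hj]

theorem tvar_central (p : NCP n) : tvar n * p = p * tvar n := Polynomial.X_mul

theorem svar_central (p : NCP n) : svar n * p = p * svar n := by
  show Polynomial.C Polynomial.X * p = p * Polynomial.C Polynomial.X
  induction p using Polynomial.induction_on with
  | C a => rw [← Polynomial.C_mul, ← Polynomial.C_mul, Polynomial.X_mul]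
  | add p q hp hq => rw [mul_add, add_mul, hp, hq]
  | monomial m a _ =>
    have c1 : Commute (Polynomial.C (Polynomial.X : Polynomial (NC n))) (Polynomial.C a) := by
      show _ = _
      rw [← Polynomial.C_mul, ← Polynomial.C_mul, Polynomial.X_mul]
    have c2 : Commute (Polynomial.C (Polynomial.X : Polynomial (NC n))) (Polynomial.X : NCP n) :=
      Polynomial.X_mul.symm
    exact (c1.mul_right (c2.pow_right _)).eq

theorem Aop_eq_PP (t : NCP n) :
    ∀ m a, a + m = n →
      ((List.range m).map fun j => 1 + t * NCPu n (n - 1 - j)).prod = PP (NCPu n) t a m := by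
  intro m
  induction m with
  | zero => intro a _; rfl
  | succ k ih =>
    intro a ha
    rw [List.range_succ, List.map_append, List.prod_append, List.map_singleton,
      List.prod_singleton, show n - 1 - k = a from by omega, ih (a + 1) (by omega)]
    rfl

end AuxConcrete

/-!
STATEMENT 3: In the nilCoxeter algebra of `W_n`, `A_i(s) A_i(t) = A_i(t) A_i(s)`
for commuting indeterminates `s`, `t` and all `1 ≤ i ≤ n-1`.
-/

theorem Aop_commute (n i : ℕ) (h1 : 1 ≤ i) (h2 : i ≤ n - 1) :
    Aop n i (svar n) * Aop n i (tvar n) = Aop n i (tvar n) * Aop n i (svar n) := by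
  have hn : i + (n - i) = n := by omega
  unfold Aop
  rw [Aop_eq_PP n (svar n) (n - i) i hn, Aop_eq_PP n (tvar n) (n - i) i hn]
  exact PP_comm (NCPu n) (svar n) (tvar n) (NCPu_sq n) (NCPu_comm n) (NCPu_braid n)
    (svar_central n) (tvar_central n) (n - i) i h1

end Giambelli
end
end

section
/- In the nilCoxeter algebra of W_n, the elements C(t) = (1 + t u_{n-1})···(1 + t u_1)(1 + 2t u_0)(1 + t u_1)···(1 + t u_{n-1}) satisfy C(s) C(t) = C(t) C(s) for all commuting indeterminates s, t. -/
open Equiv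

attribute [local instance] Classical.propDecidable

noncomputable section

namespace Giambelli

/-- `C(t) = (1+t u_{n-1})⋯(1+t u_1)(1+2t u_0)(1+t u_1)⋯(1+t u_{n-1})`. -/
def Cop (n : ℕ) (t : NCP n) : NCP n :=
  (((List.range (n - 1)).map fun j => 1 + t * NCPu n (n - 1 - j)).prod) *
    (1 + 2 * t * NCPu n 0) *
  (((List.range (n - 1)).map fun j => 1 + t * NCPu n (j + 1)).prod)

/-!
STATEMENT 4: In the nilCoxeter algebra of `W_n`, `C(s) C(t) = C(t) C(s)` for
commuting indeterminates `s`, `t`.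
-/

noncomputable instance instRingPNC (n : ℕ) : Ring (Polynomial (NC n)) := inferInstance
noncomputable instance instRingNCP (n : ℕ) : Ring (NCP n) := inferInstance

variable {n : ℕ}

lemma gen_zero {i : ℕ} (h : n ≤ i) : NCgen n i = 0 := by
  simp [NCgen, Nat.not_lt.mpr h]

lemma gen_sq (i : ℕ) : NCgen n i * NCgen n i = 0 := by
  by_cases h : i < n
  · simp only [NCgen, dif_pos h]
    rw [← map_mul]
    have := RingQuot.mkAlgHom_rel ℤ (NCRel.sq (⟨i, h⟩ : Fin n))
    rw [this, map_zero]
  · simp [NCgen, dif_neg h]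

lemma gen_comm {i j : ℕ} (h : i + 2 ≤ j) : NCgen n i * NCgen n j = NCgen n j * NCgen n i := by
  by_cases hi : i < n
  · by_cases hj : j < n
    · simp only [NCgen, dif_pos hi, dif_pos hj, ← map_mul]
      exact RingQuot.mkAlgHom_rel ℤ (NCRel.comm ⟨i, hi⟩ ⟨j, hj⟩ h)
    · simp [NCgen, dif_neg hj]
  · simp [NCgen, dif_neg hi]

lemma gen_braid {i : ℕ} (h : 1 ≤ i) :
    NCgen n i * NCgen n (i+1) * NCgen n i = NCgen n (i+1) * NCgen n i * NCgen n (i+1) := by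
  by_cases hi : i < n
  · by_cases hj : i + 1 < n
    · simp only [NCgen, dif_pos hi, dif_pos hj, ← map_mul]
      exact RingQuot.mkAlgHom_rel ℤ (NCRel.braid ⟨i, hi⟩ ⟨i+1, hj⟩ h rfl)
    · simp [NCgen, dif_neg hj, gen_sq]
  · simp [NCgen, dif_neg hi]

lemma gen_quartic :
    NCgen n 0 * NCgen n 1 * NCgen n 0 * NCgen n 1 = NCgen n 1 * NCgen n 0 * NCgen n 1 * NCgen n 0 := by
  by_cases h1 : 1 < n
  · have h0 : 0 < n := by omega
    simp only [NCgen, dif_pos h0, dif_pos h1, ← map_mul]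
    exact RingQuot.mkAlgHom_rel ℤ (NCRel.bzero ⟨0, h0⟩ ⟨1, h1⟩ rfl rfl)
  · simp [NCgen, dif_neg h1]

lemma U_sq (i : ℕ) : NCPu n i * NCPu n i = 0 := by
  simp [NCPu, ← Polynomial.C_mul, gen_sq]

lemma U_comm {i j : ℕ} (h : i + 2 ≤ j) : NCPu n i * NCPu n j = NCPu n j * NCPu n i := by
  simp only [NCPu, ← Polynomial.C_mul, gen_comm h]

lemma U_braid {i : ℕ} (h : 1 ≤ i) :
    NCPu n i * NCPu n (i+1) * NCPu n i = NCPu n (i+1) * NCPu n i * NCPu n (i+1) := by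
  simp only [NCPu, ← Polynomial.C_mul, gen_braid h]

lemma U_quartic :
    NCPu n 0 * NCPu n 1 * NCPu n 0 * NCPu n 1 = NCPu n 1 * NCPu n 0 * NCPu n 1 * NCPu n 0 := by
  simp only [NCPu, ← Polynomial.C_mul, gen_quartic]

/-- centrality -/
def Cen (a : NCP n) : Prop := ∀ z : NCP n, a * z = z * a

lemma cen_tvar : Cen (tvar n) := fun z => Polynomial.X_mul
lemma cen_svar : Cen (svar n) := by
  intro z
  ext k
  rw [svar, Polynomial.coeff_C_mul, Polynomial.coeff_mul_C, Polynomial.X_mul]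
lemma Cen.add {a b : NCP n} (ha : Cen a) (hb : Cen b) : Cen (a + b) := fun z => by
  rw [add_mul, mul_add, ha, hb]
lemma Cen.sub {a b : NCP n} (ha : Cen a) (hb : Cen b) : Cen (a - b) := fun z => by
  rw [sub_mul, mul_sub, ha, hb]
lemma Cen.neg {a : NCP n} (ha : Cen a) : Cen (-a) := fun z => by
  rw [neg_mul, mul_neg, ha]
lemma Cen.mul {a b : NCP n} (ha : Cen a) (hb : Cen b) : Cen (a * b) := fun z => by
  rw [mul_assoc, hb, ← mul_assoc, ha, mul_assoc]
lemma cen_two : Cen (2 : NCP n) := fun z => by rw [two_mul, mul_two]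
lemma Cen.move {a : NCP n} (ha : Cen a) (z w : NCP n) : z * (a * w) = a * (z * w) := by
  rw [← mul_assoc, ← ha, mul_assoc]
lemma Cen.swap {a : NCP n} (ha : Cen a) (z : NCP n) : z * a = a * z := (ha z).symm

/-- `1 + a u_i` -/
def hh (i : ℕ) (a : NCP n) : NCP n := 1 + a * NCPu n i
/-- `1 + 2a u_0` -/
def gg (a : NCP n) : NCP n := 1 + 2 * a * NCPu n 0

lemma U_sq' (i : ℕ) (w : NCP n) : NCPu n i * (NCPu n i * w) = 0 := by
  rw [← mul_assoc, U_sq, zero_mul]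

lemma hh_mul {i : ℕ} {a b : NCP n} (ha : Cen a) (hb : Cen b) :
    hh i a * hh i b = hh i (a + b) := by
  simp only [hh, mul_add, add_mul, one_mul, mul_one, mul_assoc]
  rw [hb.move (NCPu n i) (NCPu n i), U_sq, mul_zero, mul_zero]
  abel

lemma YBE {i : ℕ} (hi : 1 ≤ i) {a b : NCP n} (ha : Cen a) (hb : Cen b) :
    hh i a * hh (i+1) (a+b) * hh i b = hh (i+1) b * hh i (a+b) * hh (i+1) a := by
  have mUa : ∀ j (w : NCP n), NCPu n j * (a * w) = a * (NCPu n j * w) := fun j w => ha.move _ _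
  have mUa' : ∀ j, NCPu n j * a = a * NCPu n j := fun j => ha.swap _
  have mUb : ∀ j (w : NCP n), NCPu n j * (b * w) = b * (NCPu n j * w) := fun j w => hb.move _ _
  have mUb' : ∀ j, NCPu n j * b = b * NCPu n j := fun j => hb.swap _
  have mba : ∀ w : NCP n, b * (a * w) = a * (b * w) := fun w => ha.move _ _
  have mba' : b * a = a * b := ha.swap _
  have br : ∀ w : NCP n, NCPu n i * (NCPu n (i+1) * (NCPu n i * w))
      = NCPu n (i+1) * (NCPu n i * (NCPu n (i+1) * w)) := by
    intro w
    rw [← mul_assoc, ← mul_assoc, U_braid hi, mul_assoc, mul_assoc]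
  have br' : NCPu n i * (NCPu n (i+1) * NCPu n i)
      = NCPu n (i+1) * (NCPu n i * NCPu n (i+1)) := by
    rw [← mul_assoc, U_braid hi, mul_assoc]
  simp only [hh, mul_add, add_mul, one_mul, mul_one, mul_assoc, mUa, mUa', mUb, mUb',
    mba, mba', U_sq', U_sq, mul_zero, zero_mul, add_zero, zero_add, br, br']
  abel

lemma Ybase {a b : NCP n} (ha : Cen a) (hb : Cen b) :
    hh 1 a * gg a * hh 1 (a+b) * gg b * hh 1 b = hh 1 b * gg b * hh 1 (a+b) * gg a * hh 1 a := by
  have mUa : ∀ j (w : NCP n), NCPu n j * (a * w) = a * (NCPu n j * w) := fun j w => ha.move _ _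
  have mUa' : ∀ j, NCPu n j * a = a * NCPu n j := fun j => ha.swap _
  have mUb : ∀ j (w : NCP n), NCPu n j * (b * w) = b * (NCPu n j * w) := fun j w => hb.move _ _
  have mUb' : ∀ j, NCPu n j * b = b * NCPu n j := fun j => hb.swap _
  have mba : ∀ w : NCP n, b * (a * w) = a * (b * w) := fun w => ha.move _ _
  have mba' : b * a = a * b := ha.swap _
  have m2 : ∀ z w : NCP n, z * (2 * w) = 2 * (z * w) := fun z w => cen_two.move _ _
  have m2' : ∀ z : NCP n, z * 2 = 2 * z := fun z => cen_two.swap _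
  have qr : ∀ w : NCP n, NCPu n 1 * (NCPu n 0 * (NCPu n 1 * (NCPu n 0 * w)))
      = NCPu n 0 * (NCPu n 1 * (NCPu n 0 * (NCPu n 1 * w))) := by
    intro w
    rw [← mul_assoc, ← mul_assoc, ← mul_assoc, ← U_quartic, mul_assoc, mul_assoc, mul_assoc]
  have qr' : NCPu n 1 * (NCPu n 0 * (NCPu n 1 * NCPu n 0))
      = NCPu n 0 * (NCPu n 1 * (NCPu n 0 * NCPu n 1)) := by
    rw [← mul_assoc, ← mul_assoc, ← U_quartic, mul_assoc, mul_assoc]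
  simp only [hh, gg, mul_add, add_mul, one_mul, mul_one, mul_assoc, mUa, mUa', mUb, mUb',
    mba, mba', m2, m2', U_sq', U_sq, mul_zero, zero_mul, add_zero, zero_add, qr, qr']
  abel

lemma hh_zero (i : ℕ) : hh i (0 : NCP n) = 1 := by simp [hh]

lemma cont5 {A B C D E A' B' C' D' E' : NCP n} (h : A*B*C*D*E = A'*B'*C'*D'*E') (X : NCP n) :
    A*(B*(C*(D*(E*X)))) = A'*(B'*(C'*(D'*(E'*X)))) := by
  have h1 : A*(B*(C*(D*(E*X)))) = (A*B*C*D*E)*X := by simp only [mul_assoc]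
  have h2 : A'*(B'*(C'*(D'*(E'*X)))) = (A'*B'*C'*D'*E')*X := by simp only [mul_assoc]
  rw [h1, h2, h]

lemma contL {x y : NCP n} (h : Commute x y) (X : NCP n) : x * (y * X) = y * (x * X) := by
  rw [← mul_assoc, h.eq, mul_assoc]

lemma hhC (i : ℕ) {x y : NCP n} (hx : Cen x) (hy : Cen y) (X : NCP n) :
    hh i x * (hh i y * X) = hh i (x+y) * X := by
  rw [← mul_assoc, hh_mul hx hy]

lemma ybeC {i : ℕ} (hi : 1 ≤ i) {x y : NCP n} (hx : Cen x) (hy : Cen y) (X : NCP n) :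
    hh i x * (hh (i+1) (x+y) * (hh i y * X)) = hh (i+1) y * (hh i (x+y) * (hh (i+1) x * X)) := by
  rw [← mul_assoc, ← mul_assoc, YBE hi hx hy, mul_assoc, mul_assoc]

/-- `C_k` defined recursively. -/
def CC : ℕ → NCP n → NCP n
  | 0, a => gg a
  | (m+1), a => hh (m+1) a * CC m a * hh (m+1) a

lemma CC_zero (a : NCP n) : CC 0 a = gg a := rfl
lemma CC_succ (m : ℕ) (a : NCP n) : CC (m+1) a = hh (m+1) a * CC m a * hh (m+1) a := rfl

lemma commute_U_CC {i : ℕ} {a : NCP n} (ha : Cen a) :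
    ∀ m : ℕ, m + 2 ≤ i → Commute (NCPu n i) (CC m a) := by
  intro m
  induction m with
  | zero =>
    intro h
    rw [CC_zero]
    refine (Commute.one_right _).add_right ?_
    exact (Commute.mul_right (((cen_two.mul ha) (NCPu n i)).symm)
      ((U_comm (show 0 + 2 ≤ i by omega)).symm))
  | succ m IH =>
    intro h
    rw [CC_succ]
    have hu : Commute (NCPu n i) (hh (m+1) a) := by
      refine (Commute.one_right _).add_right ?_
      exact Commute.mul_right ((ha (NCPu n i)).symm) ((U_comm (show (m+1) + 2 ≤ i by omega)).symm)
    exact (hu.mul_right (IH (by omega))).mul_right hu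

lemma commute_hh_CC {i m : ℕ} (h : m + 2 ≤ i) {y a : NCP n} (hy : Cen y) (ha : Cen a) :
    Commute (hh i y) (CC m a) := by
  refine (Commute.one_left _).add_left ?_
  exact Commute.mul_left (hy (CC m a)) (commute_U_CC ha m h)

lemma keyY : ∀ m : ℕ, ∀ {a b : NCP n}, Cen a → Cen b → ∀ X : NCP n,
    hh (m+1) a * (CC m a * (hh (m+1) (a+b) * (CC m b * (hh (m+1) b * X))))
  = hh (m+1) b * (CC m b * (hh (m+1) (a+b) * (CC m a * (hh (m+1) a * X)))) := by
  intro m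
  induction m with
  | zero =>
    intro a b ha hb X
    exact cont5 (Ybase ha hb) X
  | succ m IH =>
    intro a b ha hb X
    have hv : 1 ≤ m + 1 := Nat.le_add_left 1 m
    have hle : m + 2 ≤ m + 1 + 1 := by omega
    have expand : ∀ (x X : NCP n), CC (m+1) x * X = hh (m+1) x * (CC m x * (hh (m+1) x * X)) := by
      intro x X
      rw [CC_succ]
      simp only [mul_assoc]
    have c1 : ∀ X : NCP n, CC m a * (hh (m+1+1) b * X) = hh (m+1+1) b * (CC m a * X) :=
      fun X => contL (commute_hh_CC hle hb ha).symm X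
    have c2 : ∀ X : NCP n, hh (m+1+1) a * (CC m b * X) = CC m b * (hh (m+1+1) a * X) :=
      fun X => contL (commute_hh_CC hle ha hb) X
    have c1' : ∀ X : NCP n, hh (m+1+1) b * (CC m a * X) = CC m a * (hh (m+1+1) b * X) :=
      fun X => (c1 X).symm
    have c2' : ∀ X : NCP n, CC m b * (hh (m+1+1) a * X) = hh (m+1+1) a * (CC m b * X) :=
      fun X => (c2 X).symm
    have y1 : ∀ X : NCP n, hh (m+1) a * (hh (m+1+1) (a+b) * (hh (m+1) b * X))
        = hh (m+1+1) b * (hh (m+1) (a+b) * (hh (m+1+1) a * X)) := ybeC hv ha hb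
    have y2 : ∀ X : NCP n, hh (m+1) b * (hh (m+1+1) (a+b) * (hh (m+1) a * X))
        = hh (m+1+1) a * (hh (m+1) (a+b) * (hh (m+1+1) b * X)) := by
      have h0 := ybeC hv hb ha
      rwa [add_comm b a] at h0
    have e1 : b + (a - b) = a := by abel
    have e2 : b - a + a = b := by abel
    have y3 : ∀ X : NCP n, hh (m+1) b * (hh (m+1+1) a * (hh (m+1) (a-b) * X))
        = hh (m+1+1) (a-b) * (hh (m+1) a * (hh (m+1+1) b * X)) := by
      have h0 := ybeC hv hb (ha.sub hb)
      rwa [e1] at h0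
    have y4 : ∀ X : NCP n, hh (m+1) (b-a) * (hh (m+1+1) b * (hh (m+1) a * X))
        = hh (m+1+1) a * (hh (m+1) b * (hh (m+1+1) (b-a) * X)) := by
      have h0 := ybeC hv (hb.sub ha) ha
      rwa [e2] at h0
    have I1 : ∀ X : NCP n, hh (m+1+1) a * (hh (m+1) a * (hh (m+1+1) b * X))
        = hh (m+1+1) b * (hh (m+1) b * (hh (m+1+1) a * (hh (m+1) (a - b) * X))) := by
      intro X
      rw [y3, hhC (m+1+1) hb (ha.sub hb), e1]
    have II1 : ∀ X : NCP n, hh (m+1+1) a * (hh (m+1) b * (hh (m+1+1) b * X))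
        = hh (m+1) (b-a) * (hh (m+1+1) b * (hh (m+1) a * (hh (m+1+1) a * X))) := by
      intro X
      rw [y4, hhC (m+1+1) (hb.sub ha) ha, e2]
    have s1 : ∀ X : NCP n, hh (m+1) (a-b) * X = hh (m+1) (-b) * (hh (m+1) a * X) := by
      intro X
      rw [hhC (m+1) hb.neg ha X, neg_add_eq_sub]
    have s2 : ∀ X : NCP n, hh (m+1) (b-a) * X = hh (m+1) b * (hh (m+1) (-a) * X) := by
      intro X
      rw [hhC (m+1) hb ha.neg X, ← sub_eq_add_neg]
    have z1 : ∀ X : NCP n, hh (m+1) (-b) * (hh (m+1) b * X) = X := by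
      intro X
      rw [hhC (m+1) hb.neg hb X, neg_add_cancel, hh_zero, one_mul]
    have z2 : ∀ X : NCP n, hh (m+1) a * (hh (m+1) (-a) * X) = X := by
      intro X
      rw [hhC (m+1) ha ha.neg X, add_neg_cancel, hh_zero, one_mul]
    simp only [expand]
    conv_lhs => rw [y1, c1, c2, I1, II1, s1, s2, IH ha hb, z1, z2]
    conv_rhs => rw [y2, c2', c1']

lemma gg_eq_hh (a : NCP n) : gg a = hh 0 (2 * a) := rfl

lemma CCcomm (m : ℕ) {a b : NCP n} (ha : Cen a) (hb : Cen b) :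
    CC m a * CC m b = CC m b * CC m a := by
  induction m with
  | zero =>
    rw [CC_zero, CC_zero, gg_eq_hh, gg_eq_hh, hh_mul (cen_two.mul ha) (cen_two.mul hb),
      hh_mul (cen_two.mul hb) (cen_two.mul ha), add_comm]
  | succ m _ =>
    calc CC (m+1) a * CC (m+1) b
        = hh (m+1) a * (CC m a * (hh (m+1) a * (hh (m+1) b * (CC m b * (hh (m+1) b * 1))))) := by
          rw [CC_succ, CC_succ]; simp only [mul_assoc, mul_one]
      _ = hh (m+1) a * (CC m a * (hh (m+1) (a+b) * (CC m b * (hh (m+1) b * 1)))) := by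
          rw [hhC (m+1) ha hb]
      _ = hh (m+1) b * (CC m b * (hh (m+1) (a+b) * (CC m a * (hh (m+1) a * 1)))) :=
          keyY m ha hb 1
      _ = hh (m+1) b * (CC m b * (hh (m+1) b * (hh (m+1) a * (CC m a * (hh (m+1) a * 1))))) := by
          rw [hhC (m+1) hb ha, add_comm b a]
      _ = CC (m+1) b * CC (m+1) a := by
          rw [CC_succ, CC_succ]; simp only [mul_assoc, mul_one]

/-- descending product `(1+a u_m)⋯(1+a u_1)` -/
def AA : ℕ → NCP n → NCP n
  | 0, _ => 1
  | (m+1), a => hh (m+1) a * AA m a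

/-- ascending product `(1+a u_1)⋯(1+a u_m)` -/
def BB : ℕ → NCP n → NCP n
  | 0, _ => 1
  | (m+1), a => BB m a * hh (m+1) a

lemma AA_prod (t : NCP n) : ∀ m : ℕ,
    ((List.range m).map fun j => 1 + t * NCPu n (m - j)).prod = AA m t := by
  intro m
  induction m with
  | zero => rfl
  | succ m ih =>
    rw [List.range_succ_eq_map]
    simp only [List.map_cons, List.prod_cons, List.map_map, Function.comp_def, Nat.succ_sub_succ,
      Nat.sub_zero]
    rw [ih]
    rfl

lemma BB_prod (t : NCP n) : ∀ m : ℕ,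
    ((List.range m).map fun j => 1 + t * NCPu n (j + 1)).prod = BB m t := by
  intro m
  induction m with
  | zero => rfl
  | succ m ih =>
    rw [List.range_succ]
    simp only [List.map_append, List.prod_append, List.map_cons, List.prod_cons, List.map_nil,
      List.prod_nil, mul_one]
    rw [ih]
    rfl

lemma CC_eq (t : NCP n) : ∀ m : ℕ, AA m t * gg t * BB m t = CC m t := by
  intro m
  induction m with
  | zero => show 1 * gg t * 1 = gg t; rw [one_mul, mul_one]
  | succ m ih =>
    show (hh (m+1) t * AA m t) * gg t * (BB m t * hh (m+1) t) = CC (m+1) t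
    rw [CC_succ, ← ih]
    simp only [mul_assoc]

lemma Cop_eq (t : NCP n) : Cop n t = CC (n - 1) t := by
  show (((List.range (n - 1)).map fun j => 1 + t * NCPu n (n - 1 - j)).prod) *
      (1 + 2 * t * NCPu n 0) *
    (((List.range (n - 1)).map fun j => 1 + t * NCPu n (j + 1)).prod) = _
  rw [show (1 + 2 * t * NCPu n 0 : NCP n) = gg t from rfl, AA_prod, BB_prod, CC_eq]

theorem Cop_commute (n : ℕ) :
    Cop n (svar n) * Cop n (tvar n) = Cop n (tvar n) * Cop n (svar n) := by
  rw [Cop_eq, Cop_eq]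
  exact CCcomm (n - 1) cen_svar cen_tvar

end Giambelli
end
end

section
/- Every k-Grassmannian signed permutation w ∈ W_n admits a unique decomposition w = (u_k,...,u_1, -ζ_1,...,-ζ_r, v_{n-k-r},...,v_1) where u, ζ, v are strict partitions of lengths k, r, and n-k-r respectively. -/
open Equiv

attribute [local instance] Classical.propDecidable

noncomputable section

namespace Giambelli

/-- `u` is a strict partition of length exactly `k` (1-based entries, normalized
to vanish outside `{1,...,k}`). -/
def IsStrictPartFn (u : ℕ → ℕ) (k : ℕ) : Prop :=
  (∀ i j : ℕ, 1 ≤ i → i < j → j ≤ k → u j < u i) ∧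
  (∀ i : ℕ, 1 ≤ i → i ≤ k → 0 < u i) ∧
  (∀ i : ℕ, i = 0 ∨ k < i → u i = 0)

/-- `lam` is a partition (1-based parts, normalized by `lam 0 = 0`). -/
def IsPartFn (lam : ℕ → ℕ) : Prop :=
  (∀ i j : ℕ, 1 ≤ i → i ≤ j → lam j ≤ lam i) ∧ lam 0 = 0 ∧
    ∃ N : ℕ, ∀ i : ℕ, N ≤ i → lam i = 0

/-- `lam` is `k`-strict: all parts greater than `k` are distinct. -/
def IsKStrict (k : ℕ) (lam : ℕ → ℕ) : Prop :=
  ∀ i j : ℕ, 1 ≤ i → i < j → k < lam j → lam j < lam i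

/-- `w = (u_k,...,u_1, -ζ_1,...,-ζ_r, v_{n-k-r},...,v_1)` as an element of `W_n`. -/
def Decomp (n k r : ℕ) (w : Equiv.Perm ℤ) (u z v : ℕ → ℕ) : Prop :=
  k + r ≤ n ∧ IsStrictPartFn u k ∧ IsStrictPartFn z r ∧ IsStrictPartFn v (n - k - r) ∧
  (∀ i : ℕ, 1 ≤ i → i ≤ k → w (i : ℤ) = (u (k + 1 - i) : ℤ)) ∧
  (∀ i : ℕ, k < i → i ≤ k + r → w (i : ℤ) = -(z (i - k) : ℤ)) ∧
  (∀ i : ℕ, k + r < i → i ≤ n → w (i : ℤ) = (v (n + 1 - i) : ℤ))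

/-- The length of column `c` of the Young diagram of `lam` (1-based). -/
def colLen (lam : ℕ → ℕ) (c : ℕ) : ℕ := Set.ncard {i : ℕ | 1 ≤ i ∧ c ≤ lam i}

/-- `lam` is the `k`-strict partition associated to the decomposition data `(u, ζ)`:
its first `k` column lengths are `μ_i = u_i + i - k - 1 + #{j | ζ_j > u_i}`, and its
part in columns `k+1` and higher is given by `ζ`. -/
def ShapeOfDecomp (k r : ℕ) (u z lam : ℕ → ℕ) : Prop :=
  (∀ i : ℕ, 1 ≤ i → i ≤ k →
    (colLen lam i : ℤ) = (u i : ℤ) + (i : ℤ) - (k : ℤ) - 1 +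
      (Set.ncard {j : ℕ | 1 ≤ j ∧ j ≤ r ∧ u i < z j} : ℤ)) ∧
  (∀ i : ℕ, 1 ≤ i → lam i - k = z i)

/-- The `k`-Grassmannian element `w` has shape the `k`-strict partition `lam`. -/
def HasShape (k : ℕ) (w : Equiv.Perm ℤ) (lam : ℕ → ℕ) : Prop :=
  IsPartFn lam ∧ IsKStrict k lam ∧
  ∃ (n r : ℕ) (u z v : ℕ → ℕ), InWn n w ∧ Decomp n k r w u z v ∧ ShapeOfDecomp k r u z lam

/-!
STATEMENT 8: Every `k`-Grassmannian signed permutation `w ∈ W_n` admits a unique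
decomposition `w = (u_k,...,u_1, -ζ_1,...,-ζ_r, v_{n-k-r},...,v_1)` where
`u, ζ, v` are strict partitions of lengths `k`, `r`, `n-k-r` respectively.
-/

section Aux

lemma wS_zero_apply (x : ℤ) : wS 0 x = if x = 1 then -1 else if x = -1 then 1 else x := by
  simp [wS, swap_apply_def]

lemma wS_pos_apply (p : ℕ) (hp : p ≠ 0) (x : ℤ) :
    wS p x = if x = (p:ℤ) then (p:ℤ)+1 else if x = (p:ℤ)+1 then (p:ℤ)
      else if x = -(p:ℤ) then -(p:ℤ)-1 else if x = -(p:ℤ)-1 then -(p:ℤ) else x := by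
  have hp1 : 1 ≤ (p:ℤ) := by exact_mod_cast Nat.one_le_iff_ne_zero.2 hp
  simp only [wS, if_neg hp, Perm.mul_apply, swap_apply_def]
  split_ifs <;> (try contradiction) <;> omega

lemma wS_invol (i : ℕ) : wS i * wS i = 1 := by
  rcases eq_or_ne i 0 with rfl | hi
  · ext x
    simp only [Perm.mul_apply, wS_zero_apply, Perm.one_apply]
    split_ifs <;> (try contradiction) <;> omega
  · ext x
    simp only [Perm.mul_apply, wS_pos_apply i hi, Perm.one_apply]
    have hp1 : 1 ≤ (i:ℤ) := by exact_mod_cast Nat.one_le_iff_ne_zero.2 hi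
    split_ifs <;> (try contradiction) <;> omega

lemma wS_odd (i : ℕ) : IsOddPerm (wS i) := by
  intro x
  rcases eq_or_ne i 0 with rfl | hi
  · simp only [wS_zero_apply]
    split_ifs <;> (try contradiction) <;> omega
  · simp only [wS_pos_apply i hi]
    have hp1 : 1 ≤ (i:ℤ) := by exact_mod_cast Nat.one_le_iff_ne_zero.2 hi
    split_ifs <;> (try contradiction) <;> omega

lemma wS_suppLe (i : ℕ) : SuppLe (i+1) (wS i) := by
  intro x hx
  rw [lt_abs] at hx
  push_cast at hx
  rcases eq_or_ne i 0 with rfl | hi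
  · rw [wS_zero_apply]; split_ifs <;> (try contradiction) <;> omega
  · rw [wS_pos_apply i hi]; split_ifs <;> (try contradiction) <;> omega

lemma odd_one : IsOddPerm 1 := by intro x; simp

lemma odd_mul {f g : Perm ℤ} (hf : IsOddPerm f) (hg : IsOddPerm g) : IsOddPerm (f * g) := by
  intro x
  simp only [Perm.mul_apply, hg x, hf (g x)]

lemma suppLe_mul {n : ℕ} {f g : Perm ℤ} (hf : SuppLe n f) (hg : SuppLe n g) :
    SuppLe n (f * g) := by
  intro x hx
  simp only [Perm.mul_apply, hg x hx, hf x hx]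

lemma suppLe_mono {m n : ℕ} {f : Perm ℤ} (h : m ≤ n) (hf : SuppLe m f) : SuppLe n f := by
  intro x hx
  exact hf x (lt_of_le_of_lt (by exact_mod_cast h) hx)

lemma odd_zero {f : Perm ℤ} (hf : IsOddPerm f) : f 0 = 0 := by
  have := hf 0
  simp at this
  omega

lemma ne_zero_of_ne_zero {f : Perm ℤ} (hf : IsOddPerm f) {x : ℤ} (hx : x ≠ 0) : f x ≠ 0 := by
  intro h
  exact hx (f.injective (by rw [h, odd_zero hf]))

lemma window {n : ℕ} {f : Perm ℤ} (h : InWn n f) {i : ℤ} (h1 : |i| ≤ n) : |f i| ≤ n := by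
  by_contra hc
  push_neg at hc
  have h2 : f (f i) = f i := h.2 _ hc
  have h3 : f i = i := f.injective h2
  rw [h3] at hc
  omega

end Aux
section NNdef

/-- inversion pairs in window `B` -/
def invF (B : ℕ) (f : Perm ℤ) : Finset (ℕ × ℕ) :=
  (Finset.Icc 1 B ×ˢ Finset.Icc 1 B).filter fun q => q.1 < q.2 ∧ f (q.2:ℤ) < f (q.1:ℤ)

/-- negative-sum pairs in window `B` -/
def sumF (B : ℕ) (f : Perm ℤ) : Finset (ℕ × ℕ) :=
  (Finset.Icc 1 B ×ˢ Finset.Icc 1 B).filter fun q => q.1 ≤ q.2 ∧ f (q.1:ℤ) + f (q.2:ℤ) < 0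

/-- the length statistic -/
def NN (B : ℕ) (f : Perm ℤ) : ℕ := (invF B f).card + (sumF B f).card

lemma mem_invF {B : ℕ} {f : Perm ℤ} {q : ℕ × ℕ} :
    q ∈ invF B f ↔ (1 ≤ q.1 ∧ q.1 ≤ B) ∧ (1 ≤ q.2 ∧ q.2 ≤ B) ∧ q.1 < q.2 ∧ f (q.2:ℤ) < f (q.1:ℤ) := by
  simp only [invF, Finset.mem_filter, Finset.mem_product, Finset.mem_Icc]
  tauto

lemma mem_sumF {B : ℕ} {f : Perm ℤ} {q : ℕ × ℕ} :
    q ∈ sumF B f ↔ (1 ≤ q.1 ∧ q.1 ≤ B) ∧ (1 ≤ q.2 ∧ q.2 ≤ B) ∧ q.1 ≤ q.2 ∧ f (q.1:ℤ) + f (q.2:ℤ) < 0 := by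
  simp only [sumF, Finset.mem_filter, Finset.mem_product, Finset.mem_Icc]
  tauto

lemma NN_one {B : ℕ} : NN B 1 = 0 := by
  have h1 : invF B 1 = ∅ := by
    rw [Finset.eq_empty_iff_forall_notMem]
    intro q hq
    rw [mem_invF] at hq
    simp only [Perm.one_apply] at hq
    omega
  have h2 : sumF B 1 = ∅ := by
    rw [Finset.eq_empty_iff_forall_notMem]
    intro q hq
    rw [mem_sumF] at hq
    simp only [Perm.one_apply] at hq
    have := hq.1.1
    have := hq.2.1.1
    omega
  simp [NN, h1, h2]

lemma NN_indep {n B : ℕ} {f : Perm ℤ} (h : InWn n f) (hB : n ≤ B) : NN B f = NN n f := by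
  have key : ∀ j : ℕ, n < j → f (j:ℤ) = (j:ℤ) := by
    intro j hj
    apply h.2
    rw [lt_abs]
    left; exact_mod_cast hj
  have win : ∀ j : ℕ, 1 ≤ j → j ≤ n → |f (j:ℤ)| ≤ n := by
    intro j h1 h2
    apply window h
    rw [abs_le]; constructor <;> [omega; exact_mod_cast h2]
  have e1 : invF B f = invF n f := by
    ext q
    rw [mem_invF, mem_invF]
    constructor
    · rintro ⟨⟨ha, hb⟩, ⟨hc, hd⟩, he, hf'⟩
      have hq2 : q.2 ≤ n := by
        by_contra hq2
        push_neg at hq2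
        rw [key q.2 hq2] at hf'
        rcases le_or_gt q.1 n with h1 | h1
        · have := win q.1 ha h1
          rw [abs_le] at this
          omega
        · rw [key q.1 h1] at hf'
          omega
      exact ⟨⟨ha, by omega⟩, ⟨hc, hq2⟩, he, hf'⟩
    · rintro ⟨⟨ha, hb⟩, ⟨hc, hd⟩, he, hf'⟩
      exact ⟨⟨ha, by omega⟩, ⟨hc, by omega⟩, he, hf'⟩
  have e2 : sumF B f = sumF n f := by
    ext q
    rw [mem_sumF, mem_sumF]
    constructor
    · rintro ⟨⟨ha, hb⟩, ⟨hc, hd⟩, he, hf'⟩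
      have hq2 : q.2 ≤ n := by
        by_contra hq2
        push_neg at hq2
        rw [key q.2 hq2] at hf'
        rcases le_or_gt q.1 n with h1 | h1
        · have := win q.1 ha h1
          rw [abs_le] at this
          omega
        · rw [key q.1 h1] at hf'
          omega
      exact ⟨⟨ha, by omega⟩, ⟨hc, hq2⟩, he, hf'⟩
    · rintro ⟨⟨ha, hb⟩, ⟨hc, hd⟩, he, hf'⟩
      exact ⟨⟨ha, by omega⟩, ⟨hc, by omega⟩, he, hf'⟩
  rw [NN, NN, e1, e2]

end NNdef
section ChangeZero

lemma invF_filter_subset {B : ℕ} {h1 h2 : Perm ℤ} (h : ∀ j : ℕ, j ≠ 1 → h1 (j:ℤ) = h2 (j:ℤ)) :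
    (invF B h1).filter (fun q => ¬ q.1 = 1) ⊆ (invF B h2).filter (fun q => ¬ q.1 = 1) := by
  intro q hq
  rw [Finset.mem_filter, mem_invF] at hq ⊢
  obtain ⟨⟨ha, hb, hc, hd⟩, hP⟩ := hq
  refine ⟨⟨ha, hb, hc, ?_⟩, hP⟩
  have h1' : 1 ≤ q.1 := ha.1
  rw [← h q.1 hP, ← h q.2 (by omega)]
  exact hd

lemma sumF_filter_subset {B : ℕ} {h1 h2 : Perm ℤ} (h : ∀ j : ℕ, j ≠ 1 → h1 (j:ℤ) = h2 (j:ℤ)) :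
    (sumF B h1).filter (fun q => ¬ q.1 = 1) ⊆ (sumF B h2).filter (fun q => ¬ q.1 = 1) := by
  intro q hq
  rw [Finset.mem_filter, mem_sumF] at hq ⊢
  obtain ⟨⟨ha, hb, hc, hd⟩, hP⟩ := hq
  refine ⟨⟨ha, hb, hc, ?_⟩, hP⟩
  have h1' : 1 ≤ q.1 := ha.1
  rw [← h q.1 hP, ← h q.2 (by omega)]
  exact hd

lemma NN_wS_zero {f : Perm ℤ} (hodd : IsOddPerm f) {B : ℕ} (hB : 1 ≤ B) :
    NN B (f * wS 0) + (if f 1 < 0 then 1 else 0) = NN B f + (if 0 < f 1 then 1 else 0) := by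
  set g := f * wS 0 with hgdef
  have hg1 : g 1 = -f 1 := by
    have : wS 0 (1:ℤ) = -1 := by rw [wS_zero_apply]; norm_num
    rw [hgdef, Perm.mul_apply, this]
    have := hodd 1
    simpa using this
  have hgj : ∀ j : ℕ, j ≠ 1 → g (j:ℤ) = f (j:ℤ) := by
    intro j hj
    have : wS 0 (j:ℤ) = (j:ℤ) := by
      rw [wS_zero_apply]; split_ifs <;> (try contradiction) <;> omega
    rw [hgdef, Perm.mul_apply, this]
  -- split all four cardinalities along q.1 = 1
  have splitInvG := Finset.card_filter_add_card_filter_not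
    (s := invF B g) (p := fun q => q.1 = 1)
  have splitSumG := Finset.card_filter_add_card_filter_not
    (s := sumF B g) (p := fun q => q.1 = 1)
  have splitInvF := Finset.card_filter_add_card_filter_not
    (s := invF B f) (p := fun q => q.1 = 1)
  have splitSumF := Finset.card_filter_add_card_filter_not
    (s := sumF B f) (p := fun q => q.1 = 1)
  have E1 : ((invF B g).filter (fun q => ¬ q.1 = 1)).card
      = ((invF B f).filter (fun q => ¬ q.1 = 1)).card := by
    congr 1
    exact Finset.Subset.antisymm (invF_filter_subset hgj)
      (invF_filter_subset (fun j hj => (hgj j hj).symm))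
  have E2 : ((sumF B g).filter (fun q => ¬ q.1 = 1)).card
      = ((sumF B f).filter (fun q => ¬ q.1 = 1)).card := by
    congr 1
    exact Finset.Subset.antisymm (sumF_filter_subset hgj)
      (sumF_filter_subset (fun j hj => (hgj j hj).symm))
  -- first-row identification
  have E3 : (invF B g).filter (fun q => q.1 = 1)
      = ((sumF B f).filter (fun q => q.1 = 1)).erase (1,1) := by
    ext q
    rw [Finset.mem_erase, Finset.mem_filter, Finset.mem_filter, mem_invF, mem_sumF]
    constructor
    · rintro ⟨⟨ha, hb, hc, hd⟩, hP⟩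
      have hq2 : q.2 ≠ 1 := by omega
      have hne : q ≠ (1,1) := by
        intro hcontra
        rw [hcontra] at hq2
        exact hq2 rfl
      refine ⟨hne, ⟨ha, hb, by omega, ?_⟩, hP⟩
      rw [hgj q.2 hq2] at hd
      have : (q.1 : ℤ) = 1 := by exact_mod_cast hP
      rw [this] at hd ⊢
      rw [hg1] at hd
      omega
    · rintro ⟨hne, ⟨ha, hb, hc, hd⟩, hP⟩
      have hq2 : q.2 ≠ 1 := by
        intro hcontra
        apply hne
        have : q = (q.1, q.2) := rfl
        rw [this, hP, hcontra]
      refine ⟨⟨ha, hb, by omega, ?_⟩, hP⟩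
      rw [hgj q.2 hq2]
      have hc1 : (q.1 : ℤ) = 1 := by exact_mod_cast hP
      rw [hc1] at hd
      rw [hP]
      push_cast
      rw [hg1]
      omega
  have E4 : (invF B f).filter (fun q => q.1 = 1)
      = ((sumF B g).filter (fun q => q.1 = 1)).erase (1,1) := by
    ext q
    rw [Finset.mem_erase, Finset.mem_filter, Finset.mem_filter, mem_invF, mem_sumF]
    constructor
    · rintro ⟨⟨ha, hb, hc, hd⟩, hP⟩
      have hq2 : q.2 ≠ 1 := by omega
      have hne : q ≠ (1,1) := by
        intro hcontra
        rw [hcontra] at hq2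
        exact hq2 rfl
      refine ⟨hne, ⟨ha, hb, by omega, ?_⟩, hP⟩
      have : (q.1 : ℤ) = 1 := by exact_mod_cast hP
      rw [this] at hd
      rw [hP]
      push_cast
      rw [hg1, hgj q.2 hq2]
      omega
    · rintro ⟨hne, ⟨ha, hb, hc, hd⟩, hP⟩
      have hq2 : q.2 ≠ 1 := by
        intro hcontra
        apply hne
        have : q = (q.1, q.2) := rfl
        rw [this, hP, hcontra]
      refine ⟨⟨ha, hb, by omega, ?_⟩, hP⟩
      rw [hP] at hd
      push_cast at hd
      rw [hg1, hgj q.2 hq2] at hd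
      have hc1 : (q.1 : ℤ) = 1 := by exact_mod_cast hP
      rw [hc1]
      omega
  have m3 : (1,1) ∈ (sumF B f).filter (fun q : ℕ × ℕ => q.1 = 1) ↔ f 1 < 0 := by
    rw [Finset.mem_filter, mem_sumF]
    simp only []
    constructor
    · rintro ⟨⟨ha, hb, hc, hd⟩, hP⟩
      push_cast at hd
      omega
    · intro hlt
      refine ⟨⟨⟨le_refl 1, hB⟩, ⟨le_refl 1, hB⟩, le_refl 1, ?_⟩, by trivial⟩
      push_cast
      omega
  have m4 : (1,1) ∈ (sumF B g).filter (fun q : ℕ × ℕ => q.1 = 1) ↔ 0 < f 1 := by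
    rw [Finset.mem_filter, mem_sumF]
    simp only []
    constructor
    · rintro ⟨⟨ha, hb, hc, hd⟩, hP⟩
      push_cast at hd
      rw [hg1] at hd
      omega
    · intro hlt
      refine ⟨⟨⟨le_refl 1, hB⟩, ⟨le_refl 1, hB⟩, le_refl 1, ?_⟩, by trivial⟩
      push_cast
      rw [hg1]
      omega
  have hf1 : f 1 ≠ 0 := ne_zero_of_ne_zero hodd (by norm_num)
  have c3 : ((invF B g).filter (fun q => q.1 = 1)).card + (if f 1 < 0 then 1 else 0)
      = ((sumF B f).filter (fun q => q.1 = 1)).card := by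
    rw [E3]
    split_ifs with h
    · exact Finset.card_erase_add_one (m3.mpr h)
    · rw [Finset.erase_eq_of_notMem (fun hc => h (m3.mp hc))]
      omega
  have c4 : ((invF B f).filter (fun q => q.1 = 1)).card + (if 0 < f 1 then 1 else 0)
      = ((sumF B g).filter (fun q => q.1 = 1)).card := by
    rw [E4]
    split_ifs with h
    · exact Finset.card_erase_add_one (m4.mpr h)
    · rw [Finset.erase_eq_of_notMem (fun hc => h (m4.mp hc))]
      omega
  rw [NN, NN]
  rcases lt_trichotomy (f 1) 0 with hs | hs | hs
  · simp only [if_pos hs, if_neg (by omega : ¬ (0:ℤ) < f 1)] at *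
    omega
  · exact absurd hs hf1
  · simp only [if_neg (by omega : ¬ f 1 < 0), if_pos hs] at *
    omega

end ChangeZero
section ChangePos

lemma NN_wS_pos {f : Perm ℤ} (p B : ℕ) (hp : p ≠ 0) (hB : p + 1 ≤ B) :
    NN B (f * wS p) + (if f ((p:ℤ)+1) < f (p:ℤ) then 1 else 0)
      = NN B f + (if f (p:ℤ) < f ((p:ℤ)+1) then 1 else 0) := by
  set g := f * wS p with hgdef
  set σ : ℕ → ℕ := fun j => if j = p then p+1 else if j = p+1 then p else j with hσdef
  have hp1 : 1 ≤ p := Nat.one_le_iff_ne_zero.2 hp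
  have hσσ : ∀ j, σ (σ j) = j := by
    intro j
    simp only [hσdef]
    split_ifs <;> omega
  have hgσ : ∀ j : ℕ, g (j:ℤ) = f ((σ j : ℕ) : ℤ) := by
    intro j
    have hws : wS p (j:ℤ) = ((σ j : ℕ) : ℤ) := by
      rw [wS_pos_apply p hp]
      simp only [hσdef]
      push_cast
      split_ifs <;> (try contradiction) <;> omega
    rw [hgdef, Perm.mul_apply, hws]
  have hσball : ∀ j, (1 ≤ j ∧ j ≤ B) → (1 ≤ σ j ∧ σ j ≤ B) := by
    intro j hj
    simp only [hσdef]
    split_ifs <;> omega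
  -- inversion part
  have cardInv : ((invF B g).erase (p, p+1)).card = ((invF B f).erase (p, p+1)).card := by
    apply Finset.card_bij' (i := fun q _ => ((σ q.1, σ q.2) : ℕ × ℕ))
      (j := fun q _ => ((σ q.1, σ q.2) : ℕ × ℕ))
    · intro q hq
      rw [Finset.mem_erase, mem_invF] at hq
      obtain ⟨hne, ha, hb, hc, hd⟩ := hq
      have hne' : ¬(q.1 = p ∧ q.2 = p + 1) := by
        intro hcon
        apply hne
        have : q = (q.1, q.2) := rfl
        rw [this, hcon.1, hcon.2]
      rw [Finset.mem_erase, mem_invF]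
      have hord : σ q.1 < σ q.2 := by
        simp only [hσdef]
        split_ifs <;> omega
      refine ⟨?_, hσball _ ha, hσball _ hb, hord, ?_⟩
      · intro hcon
        have e1 : σ q.1 = p := congrArg Prod.fst hcon
        have e2 : σ q.2 = p + 1 := congrArg Prod.snd hcon
        simp only [hσdef] at e1 e2
        split_ifs at e1 e2 <;> omega
      · rw [← hgσ q.1, ← hgσ q.2]
        exact hd
    · intro q hq
      rw [Finset.mem_erase, mem_invF] at hq
      obtain ⟨hne, ha, hb, hc, hd⟩ := hq
      have hne' : ¬(q.1 = p ∧ q.2 = p + 1) := by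
        intro hcon
        apply hne
        have : q = (q.1, q.2) := rfl
        rw [this, hcon.1, hcon.2]
      rw [Finset.mem_erase, mem_invF]
      have hord : σ q.1 < σ q.2 := by
        simp only [hσdef]
        split_ifs <;> omega
      refine ⟨?_, hσball _ ha, hσball _ hb, hord, ?_⟩
      · intro hcon
        have e1 : σ q.1 = p := congrArg Prod.fst hcon
        have e2 : σ q.2 = p + 1 := congrArg Prod.snd hcon
        simp only [hσdef] at e1 e2
        split_ifs at e1 e2 <;> omega
      · rw [hgσ (σ q.1), hgσ (σ q.2), hσσ, hσσ]
        exact hd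
    · intro q hq
      have : q = (q.1, q.2) := rfl
      rw [this]
      simp only [hσσ]
    · intro q hq
      have : q = (q.1, q.2) := rfl
      rw [this]
      simp only [hσσ]
  have memg : ((p, p+1) : ℕ × ℕ) ∈ invF B g ↔ f (p:ℤ) < f ((p:ℤ)+1) := by
    rw [mem_invF]
    have e1 : g ((p:ℕ):ℤ) = f (((p+1:ℕ)):ℤ) := by
      rw [hgσ]; congr 2; simp only [hσdef]; split_ifs <;> omega
    have e2 : g (((p+1:ℕ)):ℤ) = f ((p:ℕ):ℤ) := by
      rw [hgσ]; congr 2; simp only [hσdef]; split_ifs <;> omega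
    constructor
    · rintro ⟨ha, hb, hc, hd⟩
      simp only at hd
      rw [e1, e2] at hd
      push_cast at hd ⊢
      exact hd
    · intro h
      refine ⟨⟨hp1, by omega⟩, ⟨by omega, hB⟩, by omega, ?_⟩
      simp only
      rw [e1, e2]
      push_cast
      exact h
  have memf : ((p, p+1) : ℕ × ℕ) ∈ invF B f ↔ f ((p:ℤ)+1) < f (p:ℤ) := by
    rw [mem_invF]
    constructor
    · rintro ⟨ha, hb, hc, hd⟩
      simp only at hd
      push_cast at hd
      exact hd
    · intro h
      refine ⟨⟨hp1, by omega⟩, ⟨by omega, hB⟩, by omega, ?_⟩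
      simp only
      push_cast
      exact h
  have cg : (invF B g).card = ((invF B g).erase (p,p+1)).card
      + (if f (p:ℤ) < f ((p:ℤ)+1) then 1 else 0) := by
    split_ifs with h
    · rw [← Finset.card_erase_add_one (memg.mpr h)]
    · rw [Finset.erase_eq_of_notMem (fun hc => h (memg.mp hc))]
      omega
  have cf : (invF B f).card = ((invF B f).erase (p,p+1)).card
      + (if f ((p:ℤ)+1) < f (p:ℤ) then 1 else 0) := by
    split_ifs with h
    · rw [← Finset.card_erase_add_one (memf.mpr h)]
    · rw [Finset.erase_eq_of_notMem (fun hc => h (memf.mp hc))]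
      omega
  -- sum part
  have cardSum : (sumF B g).card = (sumF B f).card := by
    set τ : ℕ × ℕ → ℕ × ℕ :=
      fun q => if σ q.1 ≤ σ q.2 then (σ q.1, σ q.2) else (σ q.2, σ q.1) with hτdef
    have hτinv : ∀ q : ℕ × ℕ, q.1 ≤ q.2 → τ (τ q) = q := by
      rintro ⟨a, b⟩ hab
      simp only at hab
      simp only [hτdef]
      rcases le_or_gt (σ a) (σ b) with h1 | h1
      · rw [if_pos h1]
        dsimp only
        simp only [hσσ]
        rw [if_pos hab]
      · rw [if_neg (not_le.mpr h1)]
        dsimp only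
        simp only [hσσ]
        have hab' : a < b := by
          rcases Nat.lt_or_ge a b with h | h
          · exact h
          · have : a = b := le_antisymm hab h
            subst this
            omega
        rw [if_neg (by omega : ¬ b ≤ a)]
    apply Finset.card_bij' (i := fun q _ => τ q) (j := fun q _ => τ q)
    · intro q hq
      rw [mem_sumF] at hq ⊢
      obtain ⟨ha, hb, hc, hd⟩ := hq
      rw [hgσ q.1, hgσ q.2] at hd
      have m1 := hσball _ ha
      have m2 := hσball _ hb
      simp only [hτdef]
      split_ifs with hord
      · exact ⟨m1, m2, hord, hd⟩
      · have hd' : f ((σ q.2 : ℕ):ℤ) + f ((σ q.1 : ℕ):ℤ) < 0 := by omega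
        exact ⟨m2, m1, le_of_not_ge hord, hd'⟩
    · intro q hq
      rw [mem_sumF] at hq ⊢
      obtain ⟨ha, hb, hc, hd⟩ := hq
      have hd0 : g ((σ q.1 : ℕ):ℤ) + g ((σ q.2 : ℕ):ℤ) < 0 := by
        rw [hgσ (σ q.1), hgσ (σ q.2), hσσ, hσσ]
        exact hd
      have m1 := hσball _ ha
      have m2 := hσball _ hb
      simp only [hτdef]
      split_ifs with hord
      · exact ⟨m1, m2, hord, hd0⟩
      · have hd' : g ((σ q.2 : ℕ):ℤ) + g ((σ q.1 : ℕ):ℤ) < 0 := by omega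
        exact ⟨m2, m1, le_of_not_ge hord, hd'⟩
    · intro q hq
      rw [mem_sumF] at hq
      exact hτinv q hq.2.2.1
    · intro q hq
      rw [mem_sumF] at hq
      exact hτinv q hq.2.2.1
  rw [NN, NN, cg, cf, cardInv, cardSum]
  ring

end ChangePos
section Words

lemma descent_zero_iff {f : Perm ℤ} : Descent f 0 ↔ f 1 < 0 := by
  simp [Descent]

lemma descent_pos_iff {f : Perm ℤ} {p : ℕ} (hp : p ≠ 0) :
    Descent f p ↔ f ((p:ℤ)+1) < f (p:ℤ) := by
  simp [Descent, hp]

lemma NN_mul_wS {f : Perm ℤ} (hodd : IsOddPerm f) {p B : ℕ} (hB : p + 1 ≤ B) :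
    (Descent f p → NN B (f * wS p) + 1 = NN B f) ∧
    (¬ Descent f p → NN B (f * wS p) = NN B f + 1) := by
  rcases eq_or_ne p 0 with rfl | hp
  · have h0 := NN_wS_zero hodd (B := B) (by omega)
    have hf1 : f 1 ≠ 0 := ne_zero_of_ne_zero hodd (by norm_num)
    rw [descent_zero_iff]
    constructor
    · intro hd
      rw [if_pos hd, if_neg (by omega)] at h0
      omega
    · intro hd
      rw [if_neg hd, if_pos (by omega)] at h0
      omega
  · have h0 := NN_wS_pos (f := f) p B hp hB
    have hne : f ((p:ℤ)+1) ≠ f (p:ℤ) := by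
      intro h
      have := f.injective h
      omega
    rw [descent_pos_iff hp]
    constructor
    · intro hd
      rw [if_pos hd, if_neg (by omega)] at h0
      omega
    · intro hd
      rw [if_neg hd, if_pos (by omega)] at h0
      omega

lemma odd_prod (l : List ℕ) : IsOddPerm ((l.map wS).prod) := by
  induction l with
  | nil => simpa using odd_one
  | cons a t ih =>
      simp only [List.map_cons, List.prod_cons]
      exact odd_mul (wS_odd a) ih

lemma NN_le_word {B : ℕ} (l : List ℕ) (h : ∀ i ∈ l, i + 1 ≤ B) :
    NN B ((l.map wS).prod) ≤ l.length := by
  induction l using List.reverseRecOn with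
  | nil => simp [NN_one]
  | append_singleton t a ih =>
      have ha : a + 1 ≤ B := h a (by simp)
      have ht : ∀ i ∈ t, i + 1 ≤ B := fun i hi => h i (by simp [hi])
      have hodd := odd_prod t
      have hchange := NN_mul_wS hodd (f := (t.map wS).prod) (p := a) ha
      have hprod : ((t ++ [a]).map wS).prod = (t.map wS).prod * wS a := by
        simp
      rw [hprod, List.length_append]
      by_cases hd : Descent ((t.map wS).prod) a
      · have := hchange.1 hd
        have := ih ht
        simp only [List.length_singleton]
        omega
      · have := hchange.2 hd
        have := ih ht
        simp only [List.length_singleton]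
        omega

lemma no_descent_pos {f : Perm ℤ} (hodd : IsOddPerm f) (h : ∀ p : ℕ, ¬ Descent f p) :
    ∀ i : ℕ, 1 ≤ i → (0 < f (i:ℤ) ∧ ∀ j : ℕ, i < j → f (i:ℤ) < f (j:ℤ)) := by
  have hpos : ∀ i : ℕ, 1 ≤ i → 0 < f (i:ℤ) := by
    intro i hi
    induction i with
    | zero => omega
    | succ m ih =>
        rcases Nat.eq_zero_or_pos m with rfl | hm
        · have h0 := h 0
          rw [descent_zero_iff] at h0
          have : f 1 ≠ 0 := ne_zero_of_ne_zero hodd (by norm_num)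
          push_cast
          omega
        · have hm' := ih hm
          have hstep := h m
          rw [descent_pos_iff (by omega)] at hstep
          push_cast
          omega
  have hstep : ∀ i : ℕ, 1 ≤ i → f (i:ℤ) < f ((i:ℤ)+1) := by
    intro i hi
    have hstep := h i
    rw [descent_pos_iff (by omega)] at hstep
    have hne : f ((i:ℤ)+1) ≠ f (i:ℤ) := by
      intro hcon
      have := f.injective hcon
      omega
    omega
  intro i hi
  refine ⟨hpos i hi, ?_⟩
  intro j hj
  induction j with
  | zero => omega
  | succ m ih =>
      rcases Nat.lt_or_ge i m with hm | hm
      · have h1 := ih hm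
        have h2 := hstep m (by omega)
        push_cast at h2 ⊢
        omega
      · have : i = m := by omega
        subst this
        have h2 := hstep i hi
        push_cast at h2 ⊢
        omega

lemma NN_zero_of_no_descent {f : Perm ℤ} (hodd : IsOddPerm f) {B : ℕ}
    (h : ∀ p : ℕ, ¬ Descent f p) : NN B f = 0 := by
  have key := no_descent_pos hodd h
  have h1 : invF B f = ∅ := by
    rw [Finset.eq_empty_iff_forall_notMem]
    intro q hq
    rw [mem_invF] at hq
    obtain ⟨ha, hb, hc, hd⟩ := hq
    have := (key q.1 ha.1).2 q.2 hc
    omega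
  have h2 : sumF B f = ∅ := by
    rw [Finset.eq_empty_iff_forall_notMem]
    intro q hq
    rw [mem_sumF] at hq
    obtain ⟨ha, hb, hc, hd⟩ := hq
    have := (key q.1 ha.1).1
    have := (key q.2 hb.1).1
    omega
  simp [NN, h1, h2]

lemma eq_one_of_NN_zero {n : ℕ} {f : Perm ℤ} (h : InWn n f) (hNN : NN n f = 0) : f = 1 := by
  have hNN' : (invF n f).card + (sumF n f).card = 0 := hNN
  have hinv : invF n f = ∅ := Finset.card_eq_zero.mp (by omega)
  have hsum : sumF n f = ∅ := Finset.card_eq_zero.mp (by omega)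
  have hpos : ∀ i : ℕ, 1 ≤ i → i ≤ n → 0 < f (i:ℤ) := by
    intro i h1 h2
    have hmem : ((i,i) : ℕ × ℕ) ∉ sumF n f := by rw [hsum]; simp
    rw [mem_sumF] at hmem
    have h5 : ¬ (f (i:ℤ) + f (i:ℤ) < 0) := fun hcon =>
      hmem ⟨⟨h1, h2⟩, ⟨h1, h2⟩, le_refl i, hcon⟩
    have hne : f (i:ℤ) ≠ 0 := ne_zero_of_ne_zero h.1 (by
      intro hcon
      have : i = 0 := by exact_mod_cast hcon
      omega)
    omega
  have hmono : ∀ i j : ℕ, 1 ≤ i → i < j → j ≤ n → f (i:ℤ) < f (j:ℤ) := by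
    intro i j h1 h2 h3
    have hmem : ((i,j) : ℕ × ℕ) ∉ invF n f := by rw [hinv]; simp
    rw [mem_invF] at hmem
    have h4 : ¬ (f (j:ℤ) < f (i:ℤ)) := fun hcon =>
      hmem ⟨⟨h1, by omega⟩, ⟨by omega, h3⟩, h2, hcon⟩
    have hne : f (i:ℤ) ≠ f (j:ℤ) := by
      intro hcon
      have := f.injective hcon
      omega
    omega
  -- f i ≥ i on the window
  have hgei : ∀ i : ℕ, 1 ≤ i → i ≤ n → (i:ℤ) ≤ f (i:ℤ) := by
    intro i
    induction i with
    | zero => omega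
    | succ m ih =>
        intro _ h2
        rcases Nat.eq_zero_or_pos m with rfl | hm
        · have := hpos 1 (le_refl 1) (by omega)
          push_cast at this ⊢
          omega
        · have hi := ih hm (by omega)
          have := hmono m (m+1) hm (by omega) h2
          push_cast at *
          omega
  -- downward: f i = i
  have hfix : ∀ d i : ℕ, 1 ≤ i → i ≤ n → n ≤ i + d → f (i:ℤ) = (i:ℤ) := by
    intro d
    induction d with
    | zero =>
        intro i h1 h2 h3
        have : i = n := by omega
        subst this
        have hle : |f (i:ℤ)| ≤ (i:ℤ) := by
          apply window h
          rw [abs_le]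
          constructor <;> push_cast <;> omega
        have := hgei i h1 h2
        rw [abs_le] at hle
        omega
    | succ d ih =>
        intro i h1 h2 h3
        rcases Nat.lt_or_ge (i + d) n with hlt | hge
        · have hnext : f ((i+1:ℕ):ℤ) = ((i+1:ℕ):ℤ) := ih (i+1) (by omega) (by omega) (by omega)
          have hmono' := hmono i (i+1) h1 (by omega) (by omega)
          have hge' := hgei i h1 h2
          push_cast at *
          omega
        · exact ih i h1 h2 hge
  have hfixall : ∀ i : ℕ, 1 ≤ i → i ≤ n → f (i:ℤ) = (i:ℤ) :=
    fun i h1 h2 => hfix n i h1 h2 (by omega)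
  ext x
  rcases lt_trichotomy x 0 with hx | rfl | hx
  · rcases Nat.lt_or_ge n (-x).toNat with hn | hn
    · apply h.2
      rw [lt_abs]
      omega
    · have hx' : f ((((-x).toNat : ℕ)):ℤ) = (((-x).toNat : ℕ):ℤ) := by
        apply hfixall
        · omega
        · omega
      have hcast : (((-x).toNat : ℕ):ℤ) = -x := by omega
      rw [hcast] at hx'
      have := h.1 x
      rw [hx'] at this
      simp only [Perm.one_apply]
      omega
  · rw [odd_zero h.1]
    simp
  · rcases Nat.lt_or_ge n x.toNat with hn | hn
    · apply h.2
      rw [lt_abs]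
      omega
    · have hx' : f (((x.toNat : ℕ)):ℤ) = ((x.toNat : ℕ):ℤ) := by
        apply hfixall
        · omega
        · omega
      have hcast : ((x.toNat : ℕ):ℤ) = x := by omega
      rw [hcast] at hx'
      simp only [Perm.one_apply]
      omega

lemma descent_lt {n : ℕ} {f : Perm ℤ} (h : InWn n f) {p : ℕ} (hd : Descent f p) :
    p + 1 ≤ n := by
  rcases eq_or_ne p 0 with rfl | hp
  · rw [descent_zero_iff] at hd
    by_contra hc
    have hn : n = 0 := by omega
    have hone : f (1:ℤ) = (1:ℤ) := h.2 (1:ℤ) (by rw [hn]; norm_num)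
    omega
  · rw [descent_pos_iff hp] at hd
    by_contra hc
    push_neg at hc
    have hp1 : f ((p:ℤ)+1) = (p:ℤ)+1 := by
      apply h.2
      rw [lt_abs]
      left
      push_cast
      omega
    rcases Nat.lt_or_ge n p with h1 | h1
    · have : f (p:ℤ) = (p:ℤ) := by
        apply h.2
        rw [lt_abs]
        left
        push_cast
        omega
      omega
    · have : p = n := by omega
      subst this
      have hw : |f (p:ℤ)| ≤ (p:ℤ) := by
        apply window h
        rw [abs_le]
        constructor <;> push_cast <;> omega
      rw [abs_le] at hw
      omega

lemma inWn_mul_wS {n : ℕ} {f : Perm ℤ} (h : InWn n f) {p : ℕ} (hp : p + 1 ≤ n) :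
    InWn n (f * wS p) :=
  ⟨odd_mul h.1 (wS_odd p), suppLe_mul h.2 (suppLe_mono hp (wS_suppLe p))⟩

lemma exists_word {n : ℕ} : ∀ (m : ℕ) (f : Perm ℤ), InWn n f → NN n f = m →
    ∃ l : List ℕ, (∀ i ∈ l, i + 1 ≤ n) ∧ l.length = m ∧ (l.map wS).prod = f := by
  intro m
  induction m using Nat.strong_induction_on with
  | _ m ih =>
      intro f hf hNN
      rcases Nat.eq_zero_or_pos m with rfl | hm
      · refine ⟨[], by simp, by simp, ?_⟩
        simp [eq_one_of_NN_zero hf hNN]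
      · -- there is a descent
        have hdesc : ∃ p : ℕ, Descent f p := by
          by_contra hc
          push_neg at hc
          have := NN_zero_of_no_descent hf.1 (B := n) hc
          omega
        obtain ⟨p, hp⟩ := hdesc
        have hpn : p + 1 ≤ n := descent_lt hf hp
        have hchange := (NN_mul_wS hf.1 (B := n) hpn).1 hp
        have hg : InWn n (f * wS p) := inWn_mul_wS hf hpn
        obtain ⟨l, hl1, hl2, hl3⟩ := ih (m - 1) (by omega) (f * wS p) hg (by omega)
        refine ⟨l ++ [p], ?_, ?_, ?_⟩
        · intro i hi
          rcases List.mem_append.mp hi with h1 | h1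
          · exact hl1 i h1
          · simp at h1
            omega
        · simp [hl2]
          omega
        · simp only [List.map_append, List.prod_append, List.map_cons, List.prod_cons,
            List.map_nil, List.prod_nil, mul_one, hl3]
          rw [mul_assoc, wS_invol, mul_one]

lemma len_eq_NN {n : ℕ} {f : Perm ℤ} (h : InWn n f) : len f = NN n f := by
  obtain ⟨l, hl1, hl2, hl3⟩ := exists_word (NN n f) f h rfl
  apply le_antisymm
  · exact Nat.sInf_le ⟨l, hl2, hl3⟩
  · have hne : {m : ℕ | ∃ l : List ℕ, l.length = m ∧ (l.map wS).prod = f}.Nonempty :=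
      ⟨l.length, l, rfl, hl3⟩
    obtain ⟨l₀, hl₀len, hl₀prod⟩ := Nat.sInf_mem hne
    set B := n + l₀.sum + 1 with hBdef
    have hlet : ∀ i ∈ l₀, i + 1 ≤ B := by
      intro i hi
      have : i ≤ l₀.sum := List.single_le_sum (by intro x _; omega) i hi
      omega
    have h1 : NN B ((l₀.map wS).prod) ≤ l₀.length := NN_le_word l₀ hlet
    rw [hl₀prod] at h1
    rw [← NN_indep h (by omega : n ≤ B)]
    rw [hl₀len] at h1
    exact h1

lemma no_descent_of_kGrass {n k : ℕ} {w : Perm ℤ} (hw : InWn n w) (hg : kGrass k w) :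
    ∀ p : ℕ, p ≠ k → ¬ Descent w p := by
  intro p hp hd
  have hpn : p + 1 ≤ n := descent_lt hw hd
  have hgmem : InWn n (w * wS p) := inWn_mul_wS hw hpn
  have hchange := (NN_mul_wS hw.1 (B := n) hpn).1 hd
  have h1 : len (w * wS p) = NN n (w * wS p) := len_eq_NN hgmem
  have h2 : len w = NN n w := len_eq_NN hw
  have h3 := hg p hp
  omega

end Words
section DecompPart

lemma decomp_r_le {n k rA rB : ℕ} {w : Perm ℤ} {uA zA vA uB zB vB : ℕ → ℕ}
    (hA : Decomp n k rA w uA zA vA) (hB : Decomp n k rB w uB zB vB) : rB ≤ rA := by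
  by_contra hc
  push_neg at hc
  obtain ⟨hkrA, huA, hzA, hvA, hA1, hA2, hA3⟩ := hA
  obtain ⟨hkrB, huB, hzB, hvB, hB1, hB2, hB3⟩ := hB
  set i := k + rA + 1 with hidef
  have h1 : w (i:ℤ) = (vA (n + 1 - i) : ℤ) := hA3 i (by omega) (by omega)
  have h2 : w (i:ℤ) = -(zB (i - k) : ℤ) := hB2 i (by omega) (by omega)
  have h3 : 0 < zB (i - k) := hzB.2.1 (i - k) (by omega) (by omega)
  omega

lemma decomp_unique {n k r₁ r₂ : ℕ} {w : Perm ℤ} {u₁ z₁ v₁ u₂ z₂ v₂ : ℕ → ℕ}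
    (h₁ : Decomp n k r₁ w u₁ z₁ v₁) (h₂ : Decomp n k r₂ w u₂ z₂ v₂) :
    u₁ = u₂ ∧ z₁ = z₂ ∧ v₁ = v₂ ∧ r₁ = r₂ := by
  have hr : r₁ = r₂ := le_antisymm (decomp_r_le h₂ h₁) (decomp_r_le h₁ h₂)
  subst hr
  obtain ⟨hkr, hu1, hz1, hv1, hc1, hc2, hc3⟩ := h₁
  obtain ⟨hkr', hu2, hz2, hv2, hd1, hd2, hd3⟩ := h₂
  refine ⟨?_, ?_, ?_, rfl⟩
  · funext i
    by_cases hi : 1 ≤ i ∧ i ≤ k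
    · have hidx : k + 1 - (k + 1 - i) = i := by omega
      have e₁ := hc1 (k+1-i) (by omega) (by omega)
      have e₂ := hd1 (k+1-i) (by omega) (by omega)
      rw [hidx] at e₁ e₂
      omega
    · have h0 : i = 0 ∨ k < i := by omega
      rw [hu1.2.2 i h0, hu2.2.2 i h0]
  · funext i
    by_cases hi : 1 ≤ i ∧ i ≤ r₁
    · have hidx : (k + i) - k = i := by omega
      have e₁ := hc2 (k+i) (by omega) (by omega)
      have e₂ := hd2 (k+i) (by omega) (by omega)
      rw [hidx] at e₁ e₂
      omega
    · have h0 : i = 0 ∨ r₁ < i := by omega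
      rw [hz1.2.2 i h0, hz2.2.2 i h0]
  · funext i
    by_cases hi : 1 ≤ i ∧ i ≤ n - k - r₁
    · have hidx : n + 1 - (n + 1 - i) = i := by omega
      have e₁ := hc3 (n+1-i) (by omega) (by omega)
      have e₂ := hd3 (n+1-i) (by omega) (by omega)
      rw [hidx] at e₁ e₂
      omega
    · have h0 : i = 0 ∨ n - k - r₁ < i := by omega
      rw [hv1.2.2 i h0, hv2.2.2 i h0]

end DecompPart

theorem grassmannian_unique_decomposition (n k : ℕ) (hk : k ≤ n)
    (w : Equiv.Perm ℤ) (hw : InWn n w) (hg : kGrass k w) :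
    ∃! t : (ℕ → ℕ) × (ℕ → ℕ) × (ℕ → ℕ) × ℕ,
      Decomp n k t.2.2.2 w t.1 t.2.1 t.2.2.1 := by
  have nd : ∀ p : ℕ, p ≠ k → ¬ Descent w p := no_descent_of_kGrass hw hg
  have hstep : ∀ i : ℕ, 1 ≤ i → i ≠ k → w (i:ℤ) < w ((i+1:ℕ):ℤ) := by
    intro i h1 h2
    have hnd := nd i h2
    rw [descent_pos_iff (by omega : i ≠ 0)] at hnd
    have hne : w ((i:ℤ)+1) ≠ w (i:ℤ) := by
      intro hcon
      have := w.injective hcon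
      omega
    push_cast
    omega
  have hmono : ∀ i j : ℕ, 1 ≤ i → i < j → (∀ t, i ≤ t → t < j → t ≠ k) → w (i:ℤ) < w (j:ℤ) := by
    intro i j h1 h2 h3
    induction j with
    | zero => omega
    | succ m ih =>
        rcases Nat.lt_or_ge i m with hm | hm
        · have hmle := ih hm (fun t ht1 ht2 => h3 t ht1 (by omega))
          have := hstep m (by omega) (h3 m (by omega) (by omega))
          push_cast at *
          omega
        · have him : i = m := by omega
          subst him
          have := hstep i h1 (h3 i (by omega) (by omega))
          push_cast at *
          omega
  have hne0 : ∀ i : ℕ, 1 ≤ i → w (i:ℤ) ≠ 0 := by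
    intro i hi
    exact ne_zero_of_ne_zero hw.1 (by exact_mod_cast (by omega : i ≠ 0))
  have hpos1 : ∀ i : ℕ, 1 ≤ i → i ≤ k → 0 < w (i:ℤ) := by
    intro i h1 h2
    have h0 := nd 0 (by omega)
    rw [descent_zero_iff] at h0
    push_neg at h0
    have hw1 : 0 < w ((1:ℕ):ℤ) := by
      have := hne0 1 (le_refl 1)
      push_cast at *
      omega
    rcases Nat.lt_or_ge 1 i with hlt | hge
    · have := hmono 1 i (le_refl 1) hlt (fun t ht1 ht2 => by omega)
      omega
    · have : i = 1 := by omega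
      subst this
      exact hw1
  set Sneg := (Finset.Icc 1 n).filter (fun i => k < i ∧ w (i:ℤ) < 0) with hSdef
  set r := Sneg.card with hrdef
  have hSsub : Sneg ⊆ Finset.Icc (k+1) n := by
    intro t ht
    rw [hSdef, Finset.mem_filter, Finset.mem_Icc] at ht
    rw [Finset.mem_Icc]
    omega
  have hrn : k + r ≤ n := by
    have h1 := Finset.card_le_card hSsub
    rw [Nat.card_Icc] at h1
    omega
  have negpat : ∀ i : ℕ, k < i → i ≤ n → (w (i:ℤ) < 0 ↔ i ≤ k + r) := by
    intro i hik hin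
    constructor
    · intro hneg
      have hsub2 : Finset.Icc (k+1) i ⊆ Sneg := by
        intro t ht
        rw [Finset.mem_Icc] at ht
        rw [hSdef, Finset.mem_filter, Finset.mem_Icc]
        refine ⟨⟨by omega, by omega⟩, by omega, ?_⟩
        rcases Nat.lt_or_ge t i with hlt | hge
        · have := hmono t i (by omega) hlt (fun s hs1 hs2 => by omega)
          omega
        · have : t = i := by omega
          subst this
          exact hneg
      have h1 := Finset.card_le_card hsub2
      rw [Nat.card_Icc] at h1
      omega
    · intro hle
      by_contra hpos
      push_neg at hpos
      have hwpos : 0 < w (i:ℤ) := by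
        have := hne0 i (by omega)
        omega
      have hsub2 : Sneg ⊆ Finset.Icc (k+1) (i-1) := by
        intro t ht
        rw [hSdef, Finset.mem_filter, Finset.mem_Icc] at ht
        rw [Finset.mem_Icc]
        obtain ⟨⟨ht1, ht2⟩, ht3, ht4⟩ := ht
        refine ⟨by omega, ?_⟩
        by_contra hc2
        push_neg at hc2
        have hit : i ≤ t := by omega
        rcases Nat.lt_or_ge i t with hlt | hge
        · have := hmono i t (by omega) hlt (fun s hs1 hs2 => by omega)
          omega
        · have : t = i := by omega
          subst this
          omega
      have h1 := Finset.card_le_card hsub2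
      rw [Nat.card_Icc] at h1
      omega
  set u : ℕ → ℕ := fun i => if 1 ≤ i ∧ i ≤ k then (w (((k+1-i : ℕ)):ℤ)).toNat else 0 with hudef
  set z : ℕ → ℕ := fun i => if 1 ≤ i ∧ i ≤ r then (-(w (((k+i : ℕ)):ℤ))).toNat else 0 with hzdef
  set v : ℕ → ℕ := fun i => if 1 ≤ i ∧ i ≤ n-k-r then (w (((n+1-i : ℕ)):ℤ)).toNat else 0 with hvdef
  have hDecomp : Decomp n k r w u z v := by
    refine ⟨hrn, ⟨?_, ?_, ?_⟩, ⟨?_, ?_, ?_⟩, ⟨?_, ?_, ?_⟩, ?_, ?_, ?_⟩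
    · -- u decreasing
      intro i j h1 h2 h3
      simp only [hudef]
      have hci : 1 ≤ i ∧ i ≤ k := ⟨h1, by omega⟩
      have hcj : 1 ≤ j ∧ j ≤ k := ⟨by omega, h3⟩
      rw [if_pos hci, if_pos hcj]
      have hm := hmono (k+1-j) (k+1-i) (by omega) (by omega) (fun t ht1 ht2 => by omega)
      have hp := hpos1 (k+1-i) (by omega) (by omega)
      omega
    · -- u positive
      intro i h1 h2
      simp only [hudef]
      rw [if_pos ⟨h1, h2⟩]
      have hp := hpos1 (k+1-i) (by omega) (by omega)
      omega
    · -- u zero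
      intro i hi
      simp only [hudef]
      rw [if_neg (by omega)]
    · -- z decreasing
      intro i j h1 h2 h3
      simp only [hzdef]
      have hci : 1 ≤ i ∧ i ≤ r := ⟨h1, by omega⟩
      have hcj : 1 ≤ j ∧ j ≤ r := ⟨by omega, h3⟩
      rw [if_pos hci, if_pos hcj]
      have hm := hmono (k+i) (k+j) (by omega) (by omega) (fun t ht1 ht2 => by omega)
      have hni := (negpat (k+i) (by omega) (by omega)).mpr (by omega)
      have hnj := (negpat (k+j) (by omega) (by omega)).mpr (by omega)
      omega
    · -- z positive
      intro i h1 h2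
      simp only [hzdef]
      rw [if_pos ⟨h1, h2⟩]
      have hni := (negpat (k+i) (by omega) (by omega)).mpr (by omega)
      omega
    · -- z zero
      intro i hi
      simp only [hzdef]
      rw [if_neg (by omega)]
    · -- v decreasing
      intro i j h1 h2 h3
      simp only [hvdef]
      have hci : 1 ≤ i ∧ i ≤ n-k-r := ⟨h1, by omega⟩
      have hcj : 1 ≤ j ∧ j ≤ n-k-r := ⟨by omega, h3⟩
      rw [if_pos hci, if_pos hcj]
      have hm := hmono (n+1-j) (n+1-i) (by omega) (by omega) (fun t ht1 ht2 => by omega)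
      have hpa : ¬ (w (((n+1-j : ℕ)):ℤ) < 0) := by
        rw [negpat (n+1-j) (by omega) (by omega)]
        omega
      have hpb := hne0 (n+1-j) (by omega)
      omega
    · -- v positive
      intro i h1 h2
      simp only [hvdef]
      rw [if_pos ⟨h1, h2⟩]
      have hpa : ¬ (w (((n+1-i : ℕ)):ℤ) < 0) := by
        rw [negpat (n+1-i) (by omega) (by omega)]
        omega
      have hpb := hne0 (n+1-i) (by omega)
      omega
    · -- v zero
      intro i hi
      simp only [hvdef]
      rw [if_neg (by omega)]
    · -- u values
      intro i h1 h2
      simp only [hudef]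
      have hc : 1 ≤ k+1-i ∧ k+1-i ≤ k := ⟨by omega, by omega⟩
      rw [if_pos hc]
      have hidx : k+1-(k+1-i) = i := by omega
      rw [hidx]
      have hp := hpos1 i h1 h2
      omega
    · -- z values
      intro i h1 h2
      simp only [hzdef]
      have hc : 1 ≤ i-k ∧ i-k ≤ r := ⟨by omega, by omega⟩
      rw [if_pos hc]
      have hidx : k+(i-k) = i := by omega
      rw [hidx]
      have hneg := (negpat i h1 (by omega)).mpr h2
      omega
    · -- v values
      intro i h1 h2
      simp only [hvdef]
      have hc : 1 ≤ n+1-i ∧ n+1-i ≤ n-k-r := ⟨by omega, by omega⟩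
      rw [if_pos hc]
      have hidx : n+1-(n+1-i) = i := by omega
      rw [hidx]
      have hpa : ¬ (w (i:ℤ) < 0) := by
        rw [negpat i (by omega) h2]
        omega
      have hpb := hne0 i (by omega)
      omega
  refine ⟨⟨u, z, v, r⟩, hDecomp, ?_⟩
  rintro ⟨u', z', v', r'⟩ hd'
  obtain ⟨hu, hz, hv, hr⟩ := decomp_unique hd' hDecomp
  simp only [Prod.mk.injEq]
  exact ⟨hu, hz, hv, hr⟩
end Giambelli
end
end
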